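/- arXiv:math-ph/0302013 — 4 statements merged into one kernel-verified Lean document; each statement's English description precedes it below -/
import Mathlib

section
/- For a finite spin system with Hamiltonian U(J,σ) = Σ_X J_X Φ_X(σ) where the coefficients J_X are independent centered Gaussian random variables with variances Δ_X², the quenched expectation Av[ω_J(J_X Φ_X)] equals Δ_X² · Av[ω_J(Φ_X²) − ω_J(Φ_X)²], and hence is nonnegative, where ω_J denotes the Gibbs state with weights e^{U(J,σ)} over a finite configuration space with an a priori probability measure. -/
open Finset MeasureTheory ProbabilityTheory Real Filter Set Topology
open scoped NNReal ENNReal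

namespace QJPaux

variable {S : Type*} [Fintype S] [Nonempty S]

noncomputable def Fk (a φ : S → ℝ) (k : ℕ) (t : ℝ) : ℝ :=
  ∑ σ, a σ * φ σ ^ k * Real.exp (φ σ * t)

lemma Fk_pos {a : S → ℝ} (φ : S → ℝ) (ha : ∀ σ, 0 < a σ) (t : ℝ) : 0 < Fk a φ 0 t :=
  Finset.sum_pos (fun σ _ => by have := ha σ; positivity) univ_nonempty

lemma continuous_Fk (a φ : S → ℝ) (k : ℕ) : Continuous (Fk a φ k) := by
  refine continuous_finset_sum _ fun σ _ => ?_
  exact continuous_const.mul ((continuous_const.mul continuous_id).rexp)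

lemma hasDerivAt_Fk (a φ : S → ℝ) (k : ℕ) (t : ℝ) :
    HasDerivAt (Fk a φ k) (Fk a φ (k + 1) t) t := by
  unfold Fk
  refine HasDerivAt.fun_sum fun σ _ => ?_
  have h : HasDerivAt (fun t : ℝ => Real.exp (φ σ * t)) (Real.exp (φ σ * t) * (φ σ * 1)) t :=
    ((hasDerivAt_id t).const_mul (φ σ)).exp
  have h2 := h.const_mul (a σ * φ σ ^ k)
  refine h2.congr_deriv ?_
  ring

noncomputable def omf (a φ : S → ℝ) (t : ℝ) : ℝ := Fk a φ 1 t / Fk a φ 0 t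

noncomputable def omg (a φ : S → ℝ) (t : ℝ) : ℝ :=
  Fk a φ 2 t / Fk a φ 0 t - (Fk a φ 1 t / Fk a φ 0 t) ^ 2

lemma hasDerivAt_omf {a : S → ℝ} (φ : S → ℝ) (ha : ∀ σ, 0 < a σ) (t : ℝ) :
    HasDerivAt (omf a φ) (omg a φ t) t := by
  have h0 := (Fk_pos φ ha t).ne'
  have h := (hasDerivAt_Fk a φ 1 t).div (hasDerivAt_Fk a φ 0 t) h0
  refine h.congr_deriv ?_
  rw [omg]
  field_simp

lemma continuous_omf {a : S → ℝ} (φ : S → ℝ) (ha : ∀ σ, 0 < a σ) : Continuous (omf a φ) :=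
  (continuous_Fk a φ 1).div (continuous_Fk a φ 0) fun t => (Fk_pos φ ha t).ne'

lemma continuous_omg {a : S → ℝ} (φ : S → ℝ) (ha : ∀ σ, 0 < a σ) : Continuous (omg a φ) :=
  ((continuous_Fk a φ 2).div (continuous_Fk a φ 0) fun t => (Fk_pos φ ha t).ne').sub
    (((continuous_Fk a φ 1).div (continuous_Fk a φ 0) fun t => (Fk_pos φ ha t).ne').pow 2)

lemma abs_omf_le {a φ : S → ℝ} (ha : ∀ σ, 0 < a σ) {M : ℝ} (hM : ∀ σ, |φ σ| ≤ M) (t : ℝ) :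
    |omf a φ t| ≤ M := by
  have h0 := Fk_pos φ ha t
  rw [omf, abs_div, abs_of_pos h0, div_le_iff₀ h0]
  refine (Finset.abs_sum_le_sum_abs _ _).trans ?_
  rw [Fk, Finset.mul_sum]
  refine Finset.sum_le_sum fun σ _ => ?_
  have h1 := ha σ
  have h2 := hM σ
  have h3 := (Real.exp_pos (φ σ * t)).le
  have h4 := abs_nonneg (φ σ)
  rw [abs_mul, abs_mul, abs_of_pos h1, pow_one, abs_of_pos (Real.exp_pos _)]
  rw [pow_zero, mul_one]
  nlinarith [mul_le_mul_of_nonneg_left h2 (mul_nonneg h1.le h3)]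

lemma omg_nonneg {a : S → ℝ} (φ : S → ℝ) (ha : ∀ σ, 0 < a σ) (t : ℝ) : 0 ≤ omg a φ t := by
  have h0 := Fk_pos φ ha t
  have key : (Fk a φ 1 t) ^ 2 ≤ Fk a φ 0 t * Fk a φ 2 t := by
    refine Finset.sum_sq_le_sum_mul_sum_of_sq_eq_mul univ
      (f := fun σ => a σ * φ σ ^ 0 * Real.exp (φ σ * t))
      (g := fun σ => a σ * φ σ ^ 2 * Real.exp (φ σ * t))
      (fun σ _ => by have := ha σ; positivity)
      (fun σ _ => by have := ha σ; positivity)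
      (fun σ _ => by ring)
  rw [omg, sub_nonneg, div_pow, div_le_div_iff₀ (by positivity) h0]
  nlinarith

lemma omg_le {a φ : S → ℝ} (ha : ∀ σ, 0 < a σ) {M : ℝ} (hM : ∀ σ, |φ σ| ≤ M) (t : ℝ) :
    omg a φ t ≤ M ^ 2 := by
  have h0 := Fk_pos φ ha t
  have h2 : Fk a φ 2 t ≤ M ^ 2 * Fk a φ 0 t := by
    rw [Fk, Fk, Finset.mul_sum]
    refine Finset.sum_le_sum fun σ _ => ?_
    have h1 := ha σ
    have h2 := hM σ
    have h3 := (Real.exp_pos (φ σ * t)).le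
    have h5 : φ σ ^ 2 ≤ M ^ 2 := by
      rw [← sq_abs]
      exact pow_le_pow_left₀ (abs_nonneg _) h2 2
    rw [pow_zero, mul_one]
    nlinarith [mul_le_mul_of_nonneg_left h5 (mul_nonneg h1.le h3)]
  have : Fk a φ 2 t / Fk a φ 0 t ≤ M ^ 2 := by
    rw [div_le_iff₀ h0]; linarith
  have hsq : (0:ℝ) ≤ (Fk a φ 1 t / Fk a φ 0 t) ^ 2 := sq_nonneg _
  rw [omg]; linarith

lemma pdf_eq (v : ℝ≥0) (t : ℝ) :
    gaussianPDFReal 0 v t = (√(2 * π * v))⁻¹ * Real.exp (-(2 * (v:ℝ))⁻¹ * t ^ 2) := by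
  rw [gaussianPDFReal]
  congr 1
  rw [sub_zero]
  congr 1
  rw [neg_div]
  rw [div_eq_inv_mul, neg_mul]

lemma hasDerivAt_pdf {v : ℝ≥0} (hv : v ≠ 0) (t : ℝ) :
    HasDerivAt (gaussianPDFReal 0 v) (gaussianPDFReal 0 v t * (-t / v)) t := by
  have hvpos : (0:ℝ) < v := by positivity
  have h : HasDerivAt (fun t : ℝ => -(2 * (v:ℝ))⁻¹ * t ^ 2) (-(2 * (v:ℝ))⁻¹ * (2 * t ^ 1)) t :=
    (hasDerivAt_pow 2 t).const_mul _
  have h2 := (h.exp).const_mul (√(2 * π * (v:ℝ)))⁻¹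
  have hfun : (fun t : ℝ => (√(2 * π * (v:ℝ)))⁻¹ * Real.exp (-(2 * (v:ℝ))⁻¹ * t ^ 2))
      = gaussianPDFReal 0 v := funext fun t => (pdf_eq v t).symm
  rw [hfun] at h2
  refine h2.congr_deriv ?_
  rw [pdf_eq]
  have : (v:ℝ) ≠ 0 := hvpos.ne'
  field_simp

lemma tendsto_pdf_zero (v : ℝ≥0) {l : Filter ℝ} (hl : Tendsto (fun t : ℝ => t ^ 2) l atTop) :
    Tendsto (gaussianPDFReal 0 v) l (𝓝 0) := by
  by_cases hv : v = 0
  · simp only [hv, gaussianPDFReal_zero_var]; exact tendsto_const_nhds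
  have hvpos : (0:ℝ) < v := by positivity
  have h1 : Tendsto (fun t : ℝ => -(2 * (v:ℝ))⁻¹ * t ^ 2) l atBot := by
    refine Tendsto.const_mul_atTop_of_neg ?_ hl
    simp only [neg_neg, Left.neg_neg_iff]
    positivity
  have h2 := Real.tendsto_exp_atBot.comp h1
  have h3 := h2.const_mul (√(2 * π * (v:ℝ)))⁻¹
  simp only [mul_zero] at h3
  refine h3.congr fun t => ?_
  rw [pdf_eq]
  rfl


lemma integrable_abs_mul_pdf (v : ℝ≥0) :
    Integrable (fun t => |t| * gaussianPDFReal 0 v t) := by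
  by_cases hv : v = 0
  · simp only [hv, gaussianPDFReal_zero_var, Pi.zero_apply, mul_zero]
    exact integrable_zero _ _ _
  have hvpos : (0:ℝ) < v := by positivity
  have hb : (0:ℝ) < (2 * (v:ℝ))⁻¹ := by positivity
  have h := ((integrable_mul_exp_neg_mul_sq hb).abs).const_mul (√(2 * π * (v:ℝ)))⁻¹
  refine h.congr (Eventually.of_forall fun t => ?_)
  show (√(2 * π * (v:ℝ)))⁻¹ * |t * Real.exp (-(2 * (v:ℝ))⁻¹ * t ^ 2)| = _
  simp only
  rw [pdf_eq, abs_mul, abs_of_nonneg (Real.exp_pos _).le]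
  ring

lemma integrable_bdd_mul_pdf (v : ℝ≥0) {h : ℝ → ℝ} (hm : Continuous h) {C : ℝ}
    (hC : ∀ t, |h t| ≤ C) : Integrable (fun t => h t * gaussianPDFReal 0 v t) := by
  refine Integrable.mono' ((integrable_gaussianPDFReal 0 v).const_mul C)
    (hm.aestronglyMeasurable.mul (stronglyMeasurable_gaussianPDFReal 0 v).aestronglyMeasurable) ?_
  refine Eventually.of_forall fun t => ?_
  have hp := gaussianPDFReal_nonneg 0 v t
  have h1 := hC t
  rw [Real.norm_eq_abs, abs_mul, abs_of_nonneg hp]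
  nlinarith [abs_nonneg (h t)]

lemma integrable_lin_bdd_mul_pdf (v : ℝ≥0) {h : ℝ → ℝ} (hm : Continuous h) {C : ℝ}
    (hC : ∀ t, |h t| ≤ C) : Integrable (fun t => t * h t * gaussianPDFReal 0 v t) := by
  refine Integrable.mono' ((integrable_abs_mul_pdf v).const_mul C)
    ((continuous_id.mul hm).aestronglyMeasurable.mul
      (stronglyMeasurable_gaussianPDFReal 0 v).aestronglyMeasurable) ?_
  refine Eventually.of_forall fun t => ?_
  have hp := gaussianPDFReal_nonneg 0 v t
  have h1 := hC t
  have h2 := abs_nonneg (h t)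
  rw [Real.norm_eq_abs, abs_mul, abs_mul, abs_of_nonneg hp]
  nlinarith [abs_nonneg t, mul_le_mul_of_nonneg_left h1 (abs_nonneg t)]


lemma gaussianPDF_eq_coe (v : ℝ≥0) :
    gaussianPDF 0 v = fun t => ((Real.toNNReal (gaussianPDFReal 0 v t) : ℝ≥0) : ℝ≥0∞) := rfl

lemma integral_gaussianReal {v : ℝ≥0} (hv : v ≠ 0) (h : ℝ → ℝ) :
    ∫ t, h t ∂(gaussianReal 0 v) = ∫ t, h t * gaussianPDFReal 0 v t := by
  rw [gaussianReal_of_var_ne_zero _ hv, gaussianPDF_eq_coe,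
    integral_withDensity_eq_integral_smul
      ((measurable_gaussianPDFReal 0 v).real_toNNReal) h]
  refine integral_congr_ae (Eventually.of_forall fun t => ?_)
  show (Real.toNNReal (gaussianPDFReal 0 v t)) • h t = h t * gaussianPDFReal 0 v t
  rw [NNReal.smul_def, smul_eq_mul, Real.coe_toNNReal _ (gaussianPDFReal_nonneg 0 v t), mul_comm]

lemma integrable_gaussianReal_iff {v : ℝ≥0} (hv : v ≠ 0) (h : ℝ → ℝ) :
    Integrable h (gaussianReal 0 v) ↔
      Integrable (fun t => h t * gaussianPDFReal 0 v t) volume := by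
  rw [gaussianReal_of_var_ne_zero _ hv, gaussianPDF_eq_coe,
    integrable_withDensity_iff_integrable_smul
      ((measurable_gaussianPDFReal 0 v).real_toNNReal)]
  refine integrable_congr (Eventually.of_forall fun t => ?_)
  show (Real.toNNReal (gaussianPDFReal 0 v t)) • h t = h t * gaussianPDFReal 0 v t
  rw [NNReal.smul_def, smul_eq_mul, Real.coe_toNNReal _ (gaussianPDFReal_nonneg 0 v t), mul_comm]

end QJPaux


namespace QJPaux

lemma integrable_abs_gaussianReal (v : ℝ≥0) :
    Integrable (fun t : ℝ => |t|) (gaussianReal 0 v) := by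
  by_cases hv : v = 0
  · rw [hv, gaussianReal_zero_var]
    exact (integrable_const |(0:ℝ)|).congr (ae_eq_dirac (fun t : ℝ => |t|)).symm
  · rw [integrable_gaussianReal_iff hv]
    exact integrable_abs_mul_pdf v

variable {S : Type*} [Fintype S] [Nonempty S]

lemma oneDim {a : S → ℝ} (φ : S → ℝ) (ha : ∀ σ, 0 < a σ) {M : ℝ} (hM : ∀ σ, |φ σ| ≤ M)
    (v : ℝ≥0) :
    Integrable (fun t => t * omf a φ t) (gaussianReal 0 v) ∧
      ∫ t, t * omf a φ t ∂(gaussianReal 0 v) = (v:ℝ) * ∫ t, omg a φ t ∂(gaussianReal 0 v) := by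
  have hM0 : 0 ≤ M := le_trans (abs_nonneg _) (hM (Classical.arbitrary S))
  by_cases hv : v = 0
  · subst hv
    rw [gaussianReal_zero_var]
    constructor
    · exact (integrable_const _).congr (ae_eq_dirac (fun t : ℝ => t * omf a φ t)).symm
    · rw [integral_dirac, integral_dirac]
      simp
  -- main case
  have hvpos : (0:ℝ) < v := by positivity
  set p : ℝ → ℝ := gaussianPDFReal 0 v with hp
  set G : ℝ → ℝ := fun t => (v:ℝ) * omf a φ t * p t with hG
  set D : ℝ → ℝ := fun t => (v:ℝ) * omg a φ t * p t - t * omf a φ t * p t with hD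
  have hGderiv : ∀ t, HasDerivAt G (D t) t := by
    intro t
    have h1 := ((hasDerivAt_omf φ ha t).const_mul (v:ℝ)).mul (hasDerivAt_pdf hv t)
    refine HasDerivAt.congr_deriv h1 (Eq.symm ?_)
    show (v:ℝ) * omg a φ t * p t - t * omf a φ t * p t = _
    rw [hp]
    have hvne : (v:ℝ) ≠ 0 := hvpos.ne'
    field_simp
    ring
  have habs_omf : ∀ t, |omf a φ t| ≤ M := abs_omf_le ha hM
  have habs_omg : ∀ t, |omg a φ t| ≤ M ^ 2 := fun t =>
    abs_le.2 ⟨le_trans (by nlinarith) (omg_nonneg φ ha t), omg_le ha hM t⟩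
  have i1 : Integrable (fun t => t * omf a φ t * p t) volume :=
    integrable_lin_bdd_mul_pdf v (continuous_omf φ ha) habs_omf
  have i2 : Integrable (fun t => (v:ℝ) * omg a φ t * p t) volume := by
    have := integrable_bdd_mul_pdf v (h := fun t => (v:ℝ) * omg a φ t)
      (continuous_const.mul (continuous_omg φ ha)) (C := (v:ℝ) * M ^ 2) ?_
    · exact this
    · intro t
      rw [abs_mul, abs_of_nonneg (le_of_lt hvpos)]
      exact mul_le_mul_of_nonneg_left (habs_omg t) (le_of_lt hvpos)
  have iD : Integrable D volume := i2.sub i1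
  have hbound : ∀ t, ‖G t‖ ≤ (v:ℝ) * M * p t := by
    intro t
    have hpt : 0 ≤ p t := gaussianPDFReal_nonneg 0 v t
    rw [Real.norm_eq_abs, hG]
    simp only
    rw [abs_mul, abs_mul, abs_of_nonneg (le_of_lt hvpos), abs_of_nonneg hpt]
    exact mul_le_mul_of_nonneg_right (mul_le_mul_of_nonneg_left (habs_omf t) hvpos.le) hpt
  have hptend_top : Tendsto p atTop (𝓝 0) :=
    tendsto_pdf_zero v (tendsto_pow_atTop (n := 2) (by norm_num) : Tendsto (fun x : ℝ => x ^ 2) atTop atTop)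
  have hptend_bot : Tendsto p atBot (𝓝 0) := by
    refine tendsto_pdf_zero v ?_
    have h1 := (tendsto_pow_atTop (n := 2) (by norm_num) : Tendsto (fun x : ℝ => x ^ 2) atTop atTop).comp tendsto_abs_atBot_atTop
    refine h1.congr fun t => ?_
    simp [sq_abs]
  have hbtend_top : Tendsto (fun t => (v:ℝ) * M * p t) atTop (𝓝 0) := by
    simpa using hptend_top.const_mul ((v:ℝ) * M)
  have hbtend_bot : Tendsto (fun t => (v:ℝ) * M * p t) atBot (𝓝 0) := by
    simpa using hptend_bot.const_mul ((v:ℝ) * M)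
  have hGtop : Tendsto G atTop (𝓝 0) := squeeze_zero_norm hbound hbtend_top
  have hGbot : Tendsto G atBot (𝓝 0) := squeeze_zero_norm hbound hbtend_bot
  have hIoi : ∫ t in Ioi (0:ℝ), D t = 0 - G 0 :=
    integral_Ioi_of_hasDerivAt_of_tendsto' (fun x _ => hGderiv x) iD.integrableOn hGtop
  have hIic : ∫ t in Iic (0:ℝ), D t = G 0 - 0 :=
    integral_Iic_of_hasDerivAt_of_tendsto' (fun x _ => hGderiv x) iD.integrableOn hGbot
  have htot : ∫ t, D t = 0 := by
    rw [← intervalIntegral.integral_Iic_add_Ioi iD.integrableOn iD.integrableOn, hIoi, hIic]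
    ring
  have hsub : ∫ t, D t = (∫ t, (v:ℝ) * omg a φ t * p t) - ∫ t, t * omf a φ t * p t :=
    integral_sub i2 i1
  have hkey : ∫ t, t * omf a φ t * p t = (v:ℝ) * ∫ t, omg a φ t * p t := by
    have h2 : ∫ t, (v:ℝ) * omg a φ t * p t = (v:ℝ) * ∫ t, omg a φ t * p t := by
      simp_rw [mul_assoc]
      exact integral_const_mul _ _
    rw [hsub, h2] at htot
    linarith
  constructor
  · rw [integrable_gaussianReal_iff hv]
    exact i1.congr (Eventually.of_forall fun t => by rfl)
  · rw [integral_gaussianReal hv, integral_gaussianReal hv]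
    exact hkey

end QJPaux

open QJPaux

/-- Quenched expectation of `J_X Φ_X`: for a Hamiltonian `U(J,σ) = Σ_X J_X Φ_X(σ)` with
independent centered Gaussian couplings, `Av[ω_J(J_X Φ_X)] = Δ_X² Av[ω_J(Φ_X²) − ω_J(Φ_X)²] ≥ 0`. -/
theorem quenched_JPhi_nonneg
    {ι S : Type*} [Fintype ι] [Fintype S] [Nonempty S]
    (P : S → ℝ) (hP : ∀ σ, 0 < P σ) (hP1 : ∑ σ, P σ = 1)
    (Φ : ι → S → ℝ) (Δ : ι → ℝ)
    (μ : Measure (ι → ℝ))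
    (hμ : μ = Measure.pi fun X => gaussianReal 0 ⟨Δ X ^ 2, sq_nonneg (Δ X)⟩)
    (ω : (ι → ℝ) → (S → ℝ) → ℝ)
    (hω : ∀ (J : ι → ℝ) (g : S → ℝ),
      ω J g = (∑ σ, P σ * g σ * Real.exp (∑ X, J X * Φ X σ))
        / (∑ σ, P σ * Real.exp (∑ X, J X * Φ X σ)))
    (X₀ : ι) :
    (∫ J, J X₀ * ω J (Φ X₀) ∂μ
        = Δ X₀ ^ 2 * ∫ J, (ω J (fun σ => Φ X₀ σ ^ 2) - (ω J (Φ X₀)) ^ 2) ∂μ) ∧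
      0 ≤ ∫ J, J X₀ * ω J (Φ X₀) ∂μ := by
  classical
  subst hμ
  set gm : ι → Measure ℝ := fun X => gaussianReal 0 ⟨Δ X ^ 2, sq_nonneg (Δ X)⟩ with hgm
  set v : ℝ≥0 := ⟨Δ X₀ ^ 2, sq_nonneg (Δ X₀)⟩ with hv
  set K := {X : ι // ¬X = X₀} with hK
  set ν : Measure ℝ := gm X₀ with hν
  set μ' : Measure (K → ℝ) := Measure.pi (fun i : K => gm i.1) with hμ'
  haveI : ∀ X, IsProbabilityMeasure (gm X) := fun X =>
    instIsProbabilityMeasureGaussianReal 0 _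
  haveI : IsProbabilityMeasure ν := inferInstanceAs (IsProbabilityMeasure (gm X₀))
  haveI : IsProbabilityMeasure μ' :=
    inferInstanceAs (IsProbabilityMeasure (Measure.pi (fun i : K => gm i.1)))
  -- the measurable equivalence
  set E : (ι → ℝ) ≃ᵐ (ℝ × (K → ℝ)) :=
    (MeasurableEquiv.piEquivPiSubtypeProd (fun _ : ι => ℝ) (fun X => X = X₀)).trans
      ((MeasurableEquiv.funUnique {X : ι // X = X₀} ℝ).prodCongr (MeasurableEquiv.refl _))
    with hE
  have hEapp : ∀ J : ι → ℝ, E J = (J X₀, fun X : K => J X.1) := fun J => rfl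
  have hEmp : MeasurePreserving E (Measure.pi gm) (ν.prod μ') := by
    have h1 := measurePreserving_piEquivPiSubtypeProd gm (fun X => X = X₀)
    have heq : (fun i : {X : ι // X = X₀} => gm i.1) = fun _ => gm X₀ :=
      funext fun i => congrArg gm i.2
    have h2 := measurePreserving_funUnique (gm X₀) {X : ι // X = X₀}
    rw [← heq] at h2
    have h3 := h2.prod (MeasurePreserving.id μ')
    have h1' : MeasurePreserving
        (⇑(MeasurableEquiv.piEquivPiSubtypeProd (fun _ : ι => ℝ) (fun X => X = X₀)))
        (Measure.pi gm) ((Measure.pi fun i : {X : ι // X = X₀} => gm i.1).prod μ') := by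
      convert h1 using 4
    exact h3.comp h1'
  -- weights
  set A : (K → ℝ) → S → ℝ :=
    fun r σ => P σ * Real.exp (∑ X : K, r X * Φ X.1 σ) with hA
  have hApos : ∀ (r : K → ℝ) σ, 0 < A r σ := fun r σ =>
    mul_pos (hP σ) (Real.exp_pos _)
  set M : ℝ := ∑ σ, |Φ X₀ σ| with hMdef
  have hM : ∀ σ, |Φ X₀ σ| ≤ M := fun σ =>
    Finset.single_le_sum (fun τ _ => abs_nonneg (Φ X₀ τ)) (mem_univ σ)
  have hsplit : ∀ (J : ι → ℝ) σ,
      ∑ X, J X * Φ X σ = J X₀ * Φ X₀ σ + ∑ X : K, J X.1 * Φ X.1 σ := by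
    intro J σ
    rw [← Finset.add_sum_erase univ (fun X => J X * Φ X σ) (mem_univ X₀)]
    congr 1
    refine Finset.sum_subtype (univ.erase X₀) (fun X => ?_) (fun X => J X * Φ X σ)
    simp [Finset.mem_erase]
  have hωf : ∀ J : ι → ℝ,
      ω J (Φ X₀) = omf (A (fun X : K => J X.1)) (Φ X₀) (J X₀) := by
    intro J
    rw [hω, omf, Fk, Fk]
    congr 1
    · refine Finset.sum_congr rfl fun σ _ => ?_
      rw [hsplit J σ, Real.exp_add, pow_one, mul_comm (J X₀) (Φ X₀ σ)]
      ring
    · refine Finset.sum_congr rfl fun σ _ => ?_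
      rw [hsplit J σ, Real.exp_add, pow_zero, mul_comm (J X₀) (Φ X₀ σ)]
      ring
  have hωg : ∀ J : ι → ℝ,
      ω J (fun σ => Φ X₀ σ ^ 2) - (ω J (Φ X₀)) ^ 2
        = omg (A (fun X : K => J X.1)) (Φ X₀) (J X₀) := by
    intro J
    rw [omg]
    congr 1
    · rw [hω, Fk, Fk]
      congr 1
      · refine Finset.sum_congr rfl fun σ _ => ?_
        rw [hsplit J σ, Real.exp_add, mul_comm (J X₀) (Φ X₀ σ)]
        ring
      · refine Finset.sum_congr rfl fun σ _ => ?_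
        rw [hsplit J σ, Real.exp_add, pow_zero, mul_comm (J X₀) (Φ X₀ σ)]
        ring
    · rw [hωf J, omf]
  -- the functions on the product space
  set Gfun : ℝ × (K → ℝ) → ℝ := fun q => q.1 * omf (A q.2) (Φ X₀) q.1 with hGfun
  set Hfun : ℝ × (K → ℝ) → ℝ := fun q => omg (A q.2) (Φ X₀) q.1 with hHfun
  have contFk : ∀ k : ℕ, Continuous (fun q : ℝ × (K → ℝ) => Fk (A q.2) (Φ X₀) k q.1) := by
    intro k
    unfold Fk
    refine continuous_finset_sum _ fun σ _ => ?_
    have c1 : Continuous (fun q : ℝ × (K → ℝ) => ∑ X : K, q.2 X * Φ X.1 σ) :=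
      continuous_finset_sum _ fun X _ =>
        ((continuous_apply X).comp continuous_snd).mul continuous_const
    exact ((continuous_const.mul c1.rexp).mul continuous_const).mul
      ((continuous_const.mul continuous_fst).rexp)
  have contG : Continuous Gfun := by
    rw [hGfun]
    show Continuous fun q : ℝ × (K → ℝ) =>
      q.1 * (Fk (A q.2) (Φ X₀) 1 q.1 / Fk (A q.2) (Φ X₀) 0 q.1)
    exact continuous_fst.mul ((contFk 1).div (contFk 0)
      (fun q => (Fk_pos (Φ X₀) (hApos q.2) q.1).ne'))
  have contH : Continuous Hfun := by
    rw [hHfun]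
    show Continuous fun q : ℝ × (K → ℝ) =>
      Fk (A q.2) (Φ X₀) 2 q.1 / Fk (A q.2) (Φ X₀) 0 q.1
        - (Fk (A q.2) (Φ X₀) 1 q.1 / Fk (A q.2) (Φ X₀) 0 q.1) ^ 2
    exact (((contFk 2).div (contFk 0)
        (fun q => (Fk_pos (Φ X₀) (hApos q.2) q.1).ne')).sub
      (((contFk 1).div (contFk 0)
        (fun q => (Fk_pos (Φ X₀) (hApos q.2) q.1).ne')).pow 2))
  have hGint : Integrable Gfun (ν.prod μ') := by
    have h0 : Integrable (fun t : ℝ => M * |t|) ν := (integrable_abs_gaussianReal v).const_mul M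
    have hb : Integrable ((fun t : ℝ => M * |t|) ∘ Prod.fst) (ν.prod μ') := by
      refine Integrable.comp_measurable ?_ measurable_fst
      rwa [Measure.map_fst_prod, measure_univ, one_smul]
    refine hb.mono' contG.aestronglyMeasurable (Eventually.of_forall fun q => ?_)
    show |q.1 * omf (A q.2) (Φ X₀) q.1| ≤ M * |q.1|
    rw [abs_mul]
    nlinarith [abs_omf_le (hApos q.2) hM q.1, abs_nonneg q.1,
      abs_nonneg (omf (A q.2) (Φ X₀) q.1)]
  have hHint : Integrable Hfun (ν.prod μ') := by
    refine (integrable_const (M ^ 2)).mono' contH.aestronglyMeasurable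
      (Eventually.of_forall fun q => ?_)
    show |omg (A q.2) (Φ X₀) q.1| ≤ M ^ 2
    have h1 := omg_nonneg (Φ X₀) (hApos q.2) q.1
    have h2 := omg_le (hApos q.2) hM q.1
    rw [abs_of_nonneg h1]; exact h2
  -- the chain of equalities
  have e1 : ∫ J, J X₀ * ω J (Φ X₀) ∂(Measure.pi gm) = ∫ q, Gfun q ∂(ν.prod μ') := by
    rw [← hEmp.integral_comp E.measurableEmbedding Gfun]
    refine integral_congr_ae (Eventually.of_forall fun J => ?_)
    show J X₀ * ω J (Φ X₀) = Gfun (E J)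
    rw [hEapp J, hGfun]
    simp only
    rw [hωf J]
  have e6 : ∫ q, Hfun q ∂(ν.prod μ')
      = ∫ J, (ω J (fun σ => Φ X₀ σ ^ 2) - (ω J (Φ X₀)) ^ 2) ∂(Measure.pi gm) := by
    rw [← hEmp.integral_comp E.measurableEmbedding Hfun]
    refine integral_congr_ae (Eventually.of_forall fun J => ?_)
    show Hfun (E J) = _
    rw [hEapp J, hHfun]
    simp only
    rw [hωg J]
  have e3 : ∀ r : K → ℝ, ∫ t, Gfun (t, r) ∂ν = (v:ℝ) * ∫ t, Hfun (t, r) ∂ν := by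
    intro r
    have := (oneDim (Φ X₀) (hApos r) hM v).2
    exact this
  have e2 : ∫ q, Gfun q ∂(ν.prod μ') = ∫ r, ∫ t, Gfun (t, r) ∂ν ∂μ' :=
    integral_prod_symm Gfun hGint
  have e5 : ∫ r, ∫ t, Hfun (t, r) ∂ν ∂μ' = ∫ q, Hfun q ∂(ν.prod μ') :=
    (integral_prod_symm Hfun hHint).symm
  have e4 : ∫ r, ∫ t, Gfun (t, r) ∂ν ∂μ' = (v:ℝ) * ∫ r, ∫ t, Hfun (t, r) ∂ν ∂μ' := by
    rw [← integral_const_mul]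
    exact integral_congr_ae (Eventually.of_forall fun r => e3 r)
  have hvc : (v : ℝ) = Δ X₀ ^ 2 := rfl
  have main : ∫ J, J X₀ * ω J (Φ X₀) ∂(Measure.pi gm)
      = Δ X₀ ^ 2 * ∫ J, (ω J (fun σ => Φ X₀ σ ^ 2) - (ω J (Φ X₀)) ^ 2) ∂(Measure.pi gm) := by
    rw [e1, e2, e4, e5, e6, hvc]
  refine ⟨main, ?_⟩
  rw [main]
  refine mul_nonneg (sq_nonneg _) (integral_nonneg fun J => ?_)
  rw [hωg J]
  exact omg_nonneg (Φ X₀) (hApos _) _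
end

section
/- Let Λ be a finite set partitioned into nonempty disjoint subsets Λ_1, …, Λ_n. For the Gaussian random potential U_Λ(J,σ) = Σ_{X ⊆ Λ} J_X Φ_X(σ_X) with independent centered Gaussian couplings of volume-independent variances Δ_X², the quenched pressure P_Λ = Av[ln Z_Λ(J)] is superadditive: P_Λ ≥ Σ_{s=1}^n P_{Λ_s}. -/
open Finset MeasureTheory ProbabilityTheory Real
open scoped NNReal
open scoped ENNReal

lemma my_integrable_id_gaussian (v : ℝ≥0) : Integrable id (gaussianReal 0 v) := by
  by_cases hv : v = 0
  · subst hv; rw [gaussianReal_zero_var]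
    exact (integrable_const _).congr (ae_eq_dirac _).symm
  · rw [gaussianReal_of_var_ne_zero _ hv]
    rw [integrable_withDensity_iff (measurable_gaussianPDF _ _)
      (ae_of_all _ fun x => ENNReal.ofReal_lt_top)]
    have h : Integrable (fun x : ℝ => x ^ (1:ℝ) * rexp (-(2*(v:ℝ))⁻¹ * x ^ 2)) := by
      have hv' : (0:ℝ) < v := by positivity
      exact integrable_rpow_mul_exp_neg_mul_sq (by positivity) (by norm_num)
    have h2 := h.const_mul ((Real.sqrt (2 * π * v))⁻¹)
    refine h2.congr (ae_of_all _ fun x => ?_)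
    simp only [gaussianPDF_def, gaussianPDFReal, Real.rpow_one, sub_zero, id]
    rw [ENNReal.toReal_ofReal (by positivity)]
    ring_nf


lemma my_integral_id_gaussian (v : ℝ≥0) : ∫ x, x ∂(gaussianReal 0 v) = 0 := by
  have hmap := gaussianReal_map_const_mul (μ := 0) (v := v) (-1)
  have h1 : (NNReal.mk ((-1:ℝ)^2) (sq_nonneg _) : ℝ≥0) = 1 := by ext; norm_num
  rw [mul_zero, h1, one_mul] at hmap
  simp only [neg_one_mul] at hmap
  have : (gaussianReal 0 v).IsNegInvariant := ⟨hmap⟩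
  have h2 : ∫ x : ℝ, -x ∂(gaussianReal 0 v) = ∫ x : ℝ, x ∂(gaussianReal 0 v) :=
    integral_neg_eq_self (fun x => x) (gaussianReal 0 v)
  rw [integral_neg] at h2
  linarith

lemma my_map_eval_pi {ι : Type*} [Fintype ι] [DecidableEq ι] {α : ι → Type*} [∀ i, MeasurableSpace (α i)]
    (μ : ∀ i, Measure (α i)) [∀ i, IsProbabilityMeasure (μ i)] (i : ι) :
    (Measure.pi μ).map (Function.eval i) = μ i := by
  ext s hs
  rw [Measure.map_apply (measurable_pi_apply i) hs]
  have h : Function.eval i ⁻¹' s =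
      Set.pi Set.univ (Function.update (fun j => (Set.univ : Set (α j))) i s) := by
    ext x
    simp only [Set.mem_preimage, Set.mem_pi, Set.mem_univ, true_implies]
    constructor
    · intro hx j
      rcases eq_or_ne j i with rfl | hj
      · simpa using hx
      · simp [Function.update_of_ne hj]
    · intro hx
      simpa using hx i
  rw [h, Measure.pi_pi]
  rw [Fintype.prod_eq_single i (fun j hj => by simp [Function.update_of_ne hj])]
  simp

lemma my_integrable_eval_pi {ι : Type*} [Fintype ι] (v : ι → ℝ≥0) (i : ι) :
    Integrable (fun f => f i) (Measure.pi fun j => gaussianReal 0 (v j)) := by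
  classical
  have h := my_integrable_id_gaussian (v i)
  rw [← my_map_eval_pi (fun j => gaussianReal 0 (v j)) i] at h
  exact (integrable_map_measure h.aestronglyMeasurable
    (measurable_pi_apply i).aemeasurable).mp h

lemma my_integral_eval_pi {ι : Type*} [Fintype ι] (v : ι → ℝ≥0) (i : ι) :
    ∫ f, f i ∂(Measure.pi fun j => gaussianReal 0 (v j)) = 0 := by
  classical
  have h : ∫ f, f i ∂(Measure.pi fun j => gaussianReal 0 (v j))
      = ∫ x, x ∂(gaussianReal 0 (v i)) := by
    rw [← my_map_eval_pi (fun j => gaussianReal 0 (v j)) i,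
      integral_map (measurable_pi_apply i).aemeasurable]
    exact measurable_id.aestronglyMeasurable
  rw [h, my_integral_id_gaussian]

section Comb
variable {Λ : Type*} [Fintype Λ] [DecidableEq Λ] {S : Type*} [Fintype S] [Nonempty S]

lemma my_sum_w {ι : Type*} [Fintype ι] [DecidableEq ι] (ν : S → ℝ) (hν1 : ∑ x, ν x = 1) :
    ∑ f : ι → S, ∏ i, ν (f i) = 1 := by
  classical
  rw [← Fintype.piFinset_univ, ← Finset.prod_univ_sum]
  simp [hν1]

lemma my_sum_split (ν : S → ℝ) (hν1 : ∑ x, ν x = 1) (A : Finset Λ) (g h : (Λ → S) → ℝ)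
    (hg : ∀ σ τ : Λ → S, (∀ i ∈ A, σ i = τ i) → g σ = g τ)
    (hh : ∀ σ τ : Λ → S, (∀ i ∉ A, σ i = τ i) → h σ = h τ) :
    ∑ σ : Λ → S, (∏ i, ν (σ i)) * (g σ * h σ)
      = (∑ σ : Λ → S, (∏ i, ν (σ i)) * g σ) * (∑ σ : Λ → S, (∏ i, ν (σ i)) * h σ) := by
  classical
  set e := (Equiv.piEquivPiSubtypeProd (fun i : Λ => i ∈ A) (fun _ => S)).symm with he
  have key : ∀ F : (Λ → S) → ℝ, ∑ σ : Λ → S, F σ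
      = ∑ x : {i : Λ // i ∈ A} → S, ∑ y : {i : Λ // ¬ i ∈ A} → S, F (e (x, y)) := by
    intro F
    rw [← Equiv.sum_comp e F, Fintype.sum_prod_type]
  obtain ⟨s₀⟩ := ‹Nonempty S›
  set x₀ : {i : Λ // i ∈ A} → S := fun _ => s₀ with hx₀
  set y₀ : {i : Λ // ¬ i ∈ A} → S := fun _ => s₀ with hy₀
  have happ : ∀ x y i, e (x, y) i = if h : i ∈ A then x ⟨i, h⟩ else y ⟨i, h⟩ := by
    intro x y i
    simp [he, Equiv.piEquivPiSubtypeProd_symm_apply]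
  have hw : ∀ x y, (∏ i, ν (e (x, y) i)) = (∏ i, ν (x i)) * ∏ i, ν (y i) := by
    intro x y
    rw [← Fintype.prod_subtype_mul_prod_subtype (fun i : Λ => i ∈ A)
      (fun i => ν (e (x, y) i))]
    congr 1
    · exact Finset.prod_congr (by congr!) fun i _ => by rw [happ, dif_pos i.2]
    · exact Finset.prod_congr (by congr!) fun i _ => by rw [happ, dif_neg i.2]
  have hgx : ∀ x y, g (e (x, y)) = g (e (x, y₀)) := by
    intro x y
    refine hg _ _ fun i hi => ?_
    rw [happ, happ, dif_pos hi, dif_pos hi]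
  have hhy : ∀ x y, h (e (x, y)) = h (e (x₀, y)) := by
    intro x y
    refine hh _ _ fun i hi => ?_
    rw [happ, happ, dif_neg hi, dif_neg hi]
  have e1 : ∑ σ : Λ → S, (∏ i, ν (σ i)) * (g σ * h σ)
      = ∑ x : {i : Λ // i ∈ A} → S, ∑ y : {i : Λ // ¬ i ∈ A} → S,
          ((∏ i, ν (x i)) * g (e (x, y₀))) * ((∏ i, ν (y i)) * h (e (x₀, y))) := by
    rw [key]
    exact Finset.sum_congr rfl fun x _ => Finset.sum_congr rfl fun y _ => by
      rw [hw, hgx, hhy]; ring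
  have e2 : ∑ σ : Λ → S, (∏ i, ν (σ i)) * g σ
      = ∑ x : {i : Λ // i ∈ A} → S, (∏ i, ν (x i)) * g (e (x, y₀)) := by
    rw [key]
    refine Finset.sum_congr rfl fun x _ => ?_
    have : ∀ y : {i : Λ // ¬ i ∈ A} → S, (∏ i, ν (e (x, y) i)) * g (e (x, y))
        = ((∏ i, ν (x i)) * g (e (x, y₀))) * (∏ i, ν (y i)) := fun y => by
      rw [hw, hgx]; ring
    rw [Finset.sum_congr rfl fun y _ => this y, ← Finset.mul_sum, my_sum_w ν hν1, mul_one]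
  have e3 : ∑ σ : Λ → S, (∏ i, ν (σ i)) * h σ
      = ∑ y : {i : Λ // ¬ i ∈ A} → S, (∏ i, ν (y i)) * h (e (x₀, y)) := by
    rw [key]
    have : ∀ x : {i : Λ // i ∈ A} → S, ∀ y : {i : Λ // ¬ i ∈ A} → S,
        (∏ i, ν (e (x, y) i)) * h (e (x, y))
        = (∏ i, ν (x i)) * ((∏ i, ν (y i)) * h (e (x₀, y))) := fun x y => by
      rw [hw, hhy]; ring
    rw [Finset.sum_congr rfl fun x _ => Finset.sum_congr rfl fun y _ => this x y]
    rw [← Finset.sum_mul_sum]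
    rw [my_sum_w ν hν1, one_mul]
  rw [e1, e2, e3, ← Finset.sum_mul_sum]

lemma my_sum_prod_blocks (ν : S → ℝ) (hν1 : ∑ x, ν x = 1) (m : ℕ) (A : Fin m → Finset Λ)
    (hdisj : ∀ s t, s ≠ t → Disjoint (A s) (A t)) (g : Fin m → (Λ → S) → ℝ)
    (hloc : ∀ s (σ τ : Λ → S), (∀ i ∈ A s, σ i = τ i) → g s σ = g s τ) :
    ∑ σ : Λ → S, (∏ i, ν (σ i)) * ∏ s, g s σ
      = ∏ s, ∑ σ : Λ → S, (∏ i, ν (σ i)) * g s σ := by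
  induction m with
  | zero => simp [my_sum_w ν hν1]
  | succ m ih =>
    have step : ∑ σ : Λ → S, (∏ i, ν (σ i)) * ∏ s, g s σ
        = (∑ σ : Λ → S, (∏ i, ν (σ i)) * g 0 σ)
          * (∑ σ : Λ → S, (∏ i, ν (σ i)) * ∏ s : Fin m, g s.succ σ) := by
      have := my_sum_split ν hν1 (A 0) (g 0) (fun σ => ∏ s : Fin m, g s.succ σ)
        (hloc 0) ?_
      · rw [← this]
        exact Finset.sum_congr rfl fun σ _ => by rw [Fin.prod_univ_succ]
      · intro σ τ hστ
        refine Finset.prod_congr rfl fun s _ => ?_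
        refine hloc s.succ _ _ fun i hi => ?_
        refine hστ i fun hi0 => ?_
        exact (Finset.disjoint_left.mp (hdisj 0 s.succ (Fin.succ_ne_zero s).symm)) hi0 hi
    rw [step, ih (fun s => A s.succ) (fun s t hst => hdisj s.succ t.succ (by simpa using hst))
      (fun s => g s.succ) (fun s => hloc s.succ), Fin.prod_univ_succ]
end Comb

section Zq
variable {Λ : Type*} [Fintype Λ] [DecidableEq Λ] {S : Type*} [Fintype S] [Nonempty S]

noncomputable def Zq (ν : S → ℝ) (Φ : Finset Λ → (Λ → S) → ℝ) (t : Finset (Finset Λ))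
    (J : Finset Λ → ℝ) : ℝ :=
  ∑ σ : Λ → S, (∏ i, ν (σ i)) * Real.exp (∑ X ∈ t, J X * Φ X σ)

variable {ν : S → ℝ} {Φ : Finset Λ → (Λ → S) → ℝ}

lemma Zq_pos (hν : ∀ x, 0 < ν x) (t : Finset (Finset Λ)) (J : Finset Λ → ℝ) :
    0 < Zq ν Φ t J := by
  refine Finset.sum_pos (fun σ _ => ?_) Finset.univ_nonempty
  exact mul_pos (Finset.prod_pos fun i _ => hν _) (Real.exp_pos _)

lemma Zq_congr {t : Finset (Finset Λ)} {J J' : Finset Λ → ℝ}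
    (h : ∀ X ∈ t, J X = J' X) : Zq ν Φ t J = Zq ν Φ t J' := by
  refine Finset.sum_congr rfl fun σ _ => ?_
  congr 1
  exact congrArg _ (Finset.sum_congr rfl fun X hX => by rw [h X hX])

lemma continuous_log_Zq (hν : ∀ x, 0 < ν x) (t : Finset (Finset Λ)) :
    Continuous fun J : Finset Λ → ℝ => Real.log (Zq ν Φ t J) := by
  have hc : Continuous fun J : Finset Λ → ℝ => Zq ν Φ t J := by
    refine continuous_finset_sum _ fun σ _ => continuous_const.mul ?_
    exact Real.continuous_exp.comp
      (continuous_finset_sum _ fun X _ => (continuous_apply X).mul continuous_const)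
  exact hc.log fun J => (Zq_pos hν t J).ne'

lemma abs_log_Zq_le (hν : ∀ x, 0 < ν x) (hν1 : ∑ x, ν x = 1)
    {M : Finset Λ → ℝ} (hM : ∀ X (σ : Λ → S), |Φ X σ| ≤ M X)
    (t : Finset (Finset Λ)) (J : Finset Λ → ℝ) :
    |Real.log (Zq ν Φ t J)| ≤ ∑ X, |J X| * M X := by
  have hM0 : ∀ X, 0 ≤ M X := fun X =>
    le_trans (abs_nonneg _) (hM X (Classical.arbitrary _))
  set R := ∑ X, |J X| * M X with hR
  have hb : ∀ σ : Λ → S, |∑ X ∈ t, J X * Φ X σ| ≤ R := by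
    intro σ
    calc |∑ X ∈ t, J X * Φ X σ| ≤ ∑ X ∈ t, |J X * Φ X σ| := Finset.abs_sum_le_sum_abs _ _
      _ ≤ ∑ X ∈ t, |J X| * M X := Finset.sum_le_sum fun X _ => by
          rw [abs_mul]; exact mul_le_mul_of_nonneg_left (hM X σ) (abs_nonneg _)
      _ ≤ R := Finset.sum_le_sum_of_subset_of_nonneg (Finset.subset_univ t)
          (fun X _ _ => mul_nonneg (abs_nonneg _) (hM0 X))
  have hw0 : ∀ σ : Λ → S, 0 ≤ ∏ i, ν (σ i) := fun σ =>
    Finset.prod_nonneg fun i _ => (hν _).le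
  have hup : Zq ν Φ t J ≤ Real.exp R := by
    calc Zq ν Φ t J ≤ ∑ σ : Λ → S, (∏ i, ν (σ i)) * Real.exp R :=
        Finset.sum_le_sum fun σ _ => mul_le_mul_of_nonneg_left
          (Real.exp_le_exp.2 (le_of_abs_le (hb σ))) (hw0 σ)
      _ = Real.exp R := by rw [← Finset.sum_mul, my_sum_w ν hν1, one_mul]
  have hlo : Real.exp (-R) ≤ Zq ν Φ t J := by
    have h1 : Real.exp (-R) = ∑ σ : Λ → S, (∏ i, ν (σ i)) * Real.exp (-R) := by
      rw [← Finset.sum_mul, my_sum_w ν hν1, one_mul]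
    rw [h1]
    exact Finset.sum_le_sum fun σ _ => mul_le_mul_of_nonneg_left
      (Real.exp_le_exp.2 (neg_le_of_abs_le (hb σ))) (hw0 σ)
  rw [abs_le]
  constructor
  · rw [← Real.log_exp (-R)]
    exact Real.log_le_log (Real.exp_pos _) hlo
  · rw [← Real.log_exp R]
    exact Real.log_le_log (Zq_pos hν t J) hup

lemma log_Zq_add_ge (hν : ∀ x, 0 < ν x) (t : Finset (Finset Λ)) (J K : Finset Λ → ℝ) :
    Real.log (Zq ν Φ t J) +
      ∑ σ : Λ → S, ((∏ i, ν (σ i)) * Real.exp (∑ X ∈ t, J X * Φ X σ) / Zq ν Φ t J) *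
        (∑ X ∈ t, K X * Φ X σ)
      ≤ Real.log (Zq ν Φ t (J + K)) := by
  set Z₀ := Zq ν Φ t J with hZ₀def
  have hZ₀ : 0 < Z₀ := Zq_pos hν t J
  set ρ : (Λ → S) → ℝ :=
    fun σ => (∏ i, ν (σ i)) * Real.exp (∑ X ∈ t, J X * Φ X σ) / Z₀ with hρdef
  set m : (Λ → S) → ℝ := fun σ => ∑ X ∈ t, K X * Φ X σ with hmdef
  have hρ0 : ∀ σ, 0 ≤ ρ σ := fun σ => by
    refine div_nonneg (mul_nonneg (Finset.prod_nonneg fun i _ => (hν _).le)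
      (Real.exp_pos _).le) hZ₀.le
  have hρ1 : ∑ σ : Λ → S, ρ σ = 1 := by
    simp only [hρdef]
    rw [← Finset.sum_div]
    rw [show ∑ σ : Λ → S, (∏ i, ν (σ i)) * Real.exp (∑ X ∈ t, J X * Φ X σ) = Z₀ from rfl]
    exact div_self hZ₀.ne'
  set mb := ∑ σ : Λ → S, ρ σ * m σ with hmb
  have hZJK : Zq ν Φ t (J + K) = ∑ σ : Λ → S, (Z₀ * ρ σ) * Real.exp (m σ) := by
    refine Finset.sum_congr rfl fun σ _ => ?_
    have h1 : ∑ X ∈ t, (J + K) X * Φ X σ = (∑ X ∈ t, J X * Φ X σ) + m σ := by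
      rw [hmdef, ← Finset.sum_add_distrib]
      exact Finset.sum_congr rfl fun X _ => by simp [Pi.add_apply]; ring
    rw [h1, Real.exp_add, hρdef]
    field_simp
  have key : Z₀ * Real.exp mb ≤ Zq ν Φ t (J + K) := by
    rw [hZJK]
    have hterm : ∀ σ : Λ → S, (Z₀ * ρ σ) * (Real.exp mb * (1 + (m σ - mb)))
        ≤ (Z₀ * ρ σ) * Real.exp (m σ) := by
      intro σ
      refine mul_le_mul_of_nonneg_left ?_ (mul_nonneg hZ₀.le (hρ0 σ))
      calc Real.exp mb * (1 + (m σ - mb)) ≤ Real.exp mb * Real.exp (m σ - mb) := by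
            refine mul_le_mul_of_nonneg_left ?_ (Real.exp_pos _).le
            have := Real.add_one_le_exp (m σ - mb)
            linarith
        _ = Real.exp (m σ) := by rw [← Real.exp_add]; ring_nf
    calc Z₀ * Real.exp mb
        = ∑ σ : Λ → S, (Z₀ * ρ σ) * (Real.exp mb * (1 + (m σ - mb))) := by
          have e1 : (1 - mb) * (∑ σ : Λ → S, ρ σ) + (∑ σ : Λ → S, ρ σ * m σ)
              = ∑ σ : Λ → S, ((1 - mb) * ρ σ + ρ σ * m σ) := by
            rw [Finset.mul_sum, Finset.sum_add_distrib]
          have e2 : Z₀ * Real.exp mb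
              = Z₀ * Real.exp mb * ((1 - mb) * (∑ σ : Λ → S, ρ σ)
                  + ∑ σ : Λ → S, ρ σ * m σ) := by
            rw [hρ1, ← hmb]; ring
          rw [e2, e1, Finset.mul_sum]
          exact Finset.sum_congr rfl fun σ _ => by ring
      _ ≤ ∑ σ : Λ → S, (Z₀ * ρ σ) * Real.exp (m σ) := Finset.sum_le_sum fun σ _ => hterm σ
  have hlog := Real.log_le_log (by positivity) key
  rw [Real.log_mul hZ₀.ne' (Real.exp_ne_zero _), Real.log_exp] at hlog
  exact hlog

end Zq
section Fact
variable {Λ : Type*} [Fintype Λ] [DecidableEq Λ] {S : Type*} [Fintype S] [Nonempty S]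
variable {ν : S → ℝ} {Φ : Finset Λ → (Λ → S) → ℝ}

lemma log_Zq_factor (hν : ∀ x, 0 < ν x) (hν1 : ∑ x, ν x = 1)
    (hΦloc : ∀ (X : Finset Λ) (σ τ : Λ → S), (∀ i ∈ X, σ i = τ i) → Φ X σ = Φ X τ)
    (n : ℕ) (B : Fin n → Finset Λ)
    (hBdisj : ∀ s t, s ≠ t → Disjoint (B s) (B t))
    (J : Finset Λ → ℝ) (hJ : ∀ X, (¬ ∃ s, X ⊆ B s) → J X = 0) (σ₀ : Λ → S) :
    ∑ s : Fin n, Real.log (Zq ν Φ (Finset.univ.filter (· ⊆ B s)) J)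
      = Real.log (Zq ν Φ Finset.univ J) + (((n : ℝ) - 1) * Φ ∅ σ₀) * J ∅ := by
  classical
  have hφ : ∀ σ : Λ → S, Φ ∅ σ = Φ ∅ σ₀ := fun σ => hΦloc ∅ σ σ₀ (by simp)
  set c : ℝ := J ∅ * Φ ∅ σ₀ with hc
  set ts : Fin n → Finset (Finset Λ) :=
    fun s => Finset.univ.filter (fun X => X ⊆ B s ∧ X ≠ ∅) with hts
  set tne : Finset (Finset Λ) :=
    Finset.univ.filter (fun X => (∃ s, X ⊆ B s) ∧ X ≠ ∅) with htne
  -- (i) per-block: peel off the empty set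
  have hblock : ∀ s, Zq ν Φ (Finset.univ.filter (· ⊆ B s)) J
      = Real.exp c * Zq ν Φ (ts s) J := by
    intro s
    have hins : Finset.univ.filter (· ⊆ B s) = insert ∅ (ts s) := by
      ext X
      simp only [Finset.mem_filter, Finset.mem_univ, true_and, Finset.mem_insert, hts]
      constructor
      · intro h
        rcases eq_or_ne X ∅ with rfl | hne
        · exact Or.inl rfl
        · exact Or.inr ⟨h, hne⟩
      · rintro (rfl | ⟨h, _⟩)
        · exact Finset.empty_subset _
        · exact h
    have hnotmem : (∅ : Finset Λ) ∉ ts s := by simp [hts]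
    unfold Zq
    rw [Finset.mul_sum]
    refine Finset.sum_congr rfl fun σ _ => ?_
    rw [hins, Finset.sum_insert hnotmem, Real.exp_add, hφ σ, hc]
    ring
  -- (ii) whole volume: peel off the empty set
  have hwhole : Zq ν Φ Finset.univ J = Real.exp (J ∅ * Φ ∅ σ₀) * Zq ν Φ tne J := by
    have hsub : insert ∅ tne ⊆ Finset.univ := Finset.subset_univ _
    have hnotmem : (∅ : Finset Λ) ∉ tne := by simp [htne]
    unfold Zq
    rw [Finset.mul_sum]
    refine Finset.sum_congr rfl fun σ _ => ?_
    have hzero : ∀ X ∈ Finset.univ, X ∉ insert ∅ tne → J X * Φ X σ = 0 := by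
      intro X _ hX
      simp only [Finset.mem_insert, htne, Finset.mem_filter, Finset.mem_univ, true_and,
        not_or, not_and, not_not] at hX
      have : ¬ ∃ s, X ⊆ B s := fun h => hX.1 (hX.2 h)
      rw [hJ X this, zero_mul]
    rw [← Finset.sum_subset hsub hzero, Finset.sum_insert hnotmem, Real.exp_add, hφ σ]
    ring
  -- (iii) factorization over blocks
  have hfact : Zq ν Φ tne J = ∏ s, Zq ν Φ (ts s) J := by
    have hdisj' : (↑(Finset.univ : Finset (Fin n)) : Set (Fin n)).PairwiseDisjoint ts := by
      intro s _ t _ hst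
      refine Finset.disjoint_left.mpr fun X hX hX' => ?_
      simp only [hts, Finset.mem_filter, Finset.mem_univ, true_and] at hX hX'
      obtain ⟨i, hi⟩ := Finset.nonempty_iff_ne_empty.mpr hX.2
      exact Finset.disjoint_left.mp (hBdisj s t hst) (hX.1 hi) (hX'.1 hi)
    have hbiU : tne = Finset.univ.biUnion ts := by
      ext X
      simp only [htne, hts, Finset.mem_filter, Finset.mem_univ, true_and,
        Finset.mem_biUnion]
      tauto
    have hsplit : ∀ σ : Λ → S, Real.exp (∑ X ∈ tne, J X * Φ X σ)
        = ∏ s, Real.exp (∑ X ∈ ts s, J X * Φ X σ) := by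
      intro σ
      rw [hbiU, Finset.sum_biUnion hdisj', Real.exp_sum]
    have hloc : ∀ s (σ τ : Λ → S), (∀ i ∈ B s, σ i = τ i) →
        Real.exp (∑ X ∈ ts s, J X * Φ X σ) = Real.exp (∑ X ∈ ts s, J X * Φ X τ) := by
      intro s σ τ h
      congr 1
      refine Finset.sum_congr rfl fun X hX => ?_
      simp only [hts, Finset.mem_filter, Finset.mem_univ, true_and] at hX
      rw [hΦloc X σ τ fun i hi => h i (hX.1 hi)]
    calc Zq ν Φ tne J
        = ∑ σ : Λ → S, (∏ i, ν (σ i)) * ∏ s, Real.exp (∑ X ∈ ts s, J X * Φ X σ) := by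
          exact Finset.sum_congr rfl fun σ _ => by rw [hsplit σ]
      _ = ∏ s, ∑ σ : Λ → S, (∏ i, ν (σ i)) * Real.exp (∑ X ∈ ts s, J X * Φ X σ) :=
          my_sum_prod_blocks ν hν1 n B hBdisj _ hloc
      _ = ∏ s, Zq ν Φ (ts s) J := rfl
  -- put it together
  have hZpos : ∀ t : Finset (Finset Λ), (0:ℝ) < Zq ν Φ t J := fun t => Zq_pos hν t J
  have hlogblock : ∀ s, Real.log (Zq ν Φ (Finset.univ.filter (· ⊆ B s)) J)
      = c + Real.log (Zq ν Φ (ts s) J) := by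
    intro s
    rw [hblock s, Real.log_mul (Real.exp_ne_zero _) (hZpos _).ne', Real.log_exp]
  have hlogwhole : Real.log (Zq ν Φ Finset.univ J)
      = c + ∑ s, Real.log (Zq ν Φ (ts s) J) := by
    rw [hwhole, Real.log_mul (Real.exp_ne_zero _) (hZpos _).ne', Real.log_exp, hfact,
      Real.log_prod fun s _ => (hZpos _).ne', hc]
  rw [Finset.sum_congr rfl fun s _ => hlogblock s, Finset.sum_add_distrib,
    Finset.sum_const, hlogwhole]
  simp only [Finset.card_univ, Fintype.card_fin, nsmul_eq_mul, hc]
  ring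
end Fact
/-- Superadditivity of the quenched pressure: if `Λ` is partitioned into nonempty disjoint
blocks `B s`, then `P_Λ = Av[ln Z_Λ(J)] ≥ Σ_s P_{B s}`. -/
theorem quenched_pressure_superadditive
    {Λ S : Type*} [Fintype Λ] [DecidableEq Λ] [Fintype S] [Nonempty S]
    (ν : S → ℝ) (hν : ∀ x, 0 < ν x) (hν1 : ∑ x, ν x = 1)
    (Φ : Finset Λ → (Λ → S) → ℝ)
    (hΦloc : ∀ (X : Finset Λ) (σ τ : Λ → S), (∀ i ∈ X, σ i = τ i) → Φ X σ = Φ X τ)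
    (Δ : Finset Λ → ℝ)
    (μ : Measure (Finset Λ → ℝ))
    (hμ : μ = Measure.pi fun X => gaussianReal 0 ⟨Δ X ^ 2, sq_nonneg (Δ X)⟩)
    (n : ℕ) (B : Fin n → Finset Λ)
    (hBne : ∀ s, (B s).Nonempty)
    (hBdisj : ∀ s t, s ≠ t → Disjoint (B s) (B t))
    (hBcover : ∀ i, ∃ s, i ∈ B s) :
    ∑ s : Fin n, ∫ J,
        Real.log (∑ σ : Λ → S, (∏ i, ν (σ i)) *
          Real.exp (∑ X ∈ Finset.univ.filter (· ⊆ B s), J X * Φ X σ)) ∂μ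
      ≤ ∫ J,
        Real.log (∑ σ : Λ → S, (∏ i, ν (σ i)) *
          Real.exp (∑ X, J X * Φ X σ)) ∂μ := by
  classical
  subst hμ
  set v : Finset Λ → ℝ≥0 := fun X => ⟨Δ X ^ 2, sq_nonneg (Δ X)⟩ with hv
  set p : Finset Λ → Prop := fun X => ∃ s, X ⊆ B s with hp
  haveI : DecidablePred p := Classical.decPred p
  set μ₀ : Measure (Finset Λ → ℝ) := Measure.pi fun X => gaussianReal 0 (v X) with hμ₀
  set μ₁ : Measure ({X : Finset Λ // p X} → ℝ) :=
    Measure.pi fun X => gaussianReal 0 (v X.1) with hμ₁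
  set μ₂ : Measure ({X : Finset Λ // ¬ p X} → ℝ) :=
    Measure.pi fun X => gaussianReal 0 (v X.1) with hμ₂
  have σ₀ : Λ → S := Classical.arbitrary _
  show (∑ s : Fin n, ∫ J, Real.log (Zq ν Φ (Finset.univ.filter (· ⊆ B s)) J) ∂μ₀)
    ≤ ∫ J, Real.log (Zq ν Φ Finset.univ J) ∂μ₀
  set e := MeasurableEquiv.piEquivPiSubtypeProd (fun _ : Finset Λ => ℝ) p with he
  have MP : MeasurePreserving e μ₀ (μ₁.prod μ₂) :=
    measurePreserving_piEquivPiSubtypeProd (fun X => gaussianReal 0 (v X)) p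
  have MPs : MeasurePreserving e.symm (μ₁.prod μ₂) μ₀ := MP.symm e
  -- bounds on Φ
  set M : Finset Λ → ℝ :=
    fun X => Finset.univ.sup' Finset.univ_nonempty fun σ : Λ → S => |Φ X σ| with hMdef
  have hM : ∀ (X : Finset Λ) (σ : Λ → S), |Φ X σ| ≤ M X := by
    intro X σ
    simp only [hMdef]
    exact Finset.le_sup' (fun σ : Λ → S => |Φ X σ|) (Finset.mem_univ σ)
  -- the two coordinate injections
  set J₀ : ({X : Finset Λ // p X} → ℝ) → Finset Λ → ℝ :=
    fun a X => if h : p X then a ⟨X, h⟩ else 0 with hJ₀def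
  set K₀ : ({X : Finset Λ // ¬ p X} → ℝ) → Finset Λ → ℝ :=
    fun b X => if h : p X then 0 else b ⟨X, h⟩ with hK₀def
  have hesymm : ∀ a b, e.symm (a, b) = J₀ a + K₀ b := by
    intro a b
    funext X
    show (Equiv.piEquivPiSubtypeProd p (fun _ : Finset Λ => ℝ)).symm (a, b) X = _
    rw [Equiv.piEquivPiSubtypeProd_symm_apply]
    by_cases h : p X
    · simp [hJ₀def, hK₀def, h]
    · simp [hJ₀def, hK₀def, h]
  -- integrability over μ₀
  have hintJX : ∀ X : Finset Λ, Integrable (fun J : Finset Λ → ℝ => J X) μ₀ :=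
    fun X => my_integrable_eval_pi v X
  have hintlogZ : ∀ t : Finset (Finset Λ),
      Integrable (fun J => Real.log (Zq ν Φ t J)) μ₀ := by
    intro t
    refine Integrable.mono' (g := fun J => ∑ X, |J X| * M X)
      (integrable_finset_sum _ fun X _ => ((hintJX X).abs.mul_const (M X)))
      ((continuous_log_Zq hν t).aestronglyMeasurable) (ae_of_all _ fun J => ?_)
    rw [Real.norm_eq_abs]
    exact abs_log_Zq_le hν hν1 hM t J
  have hintProd : ∀ t : Finset (Finset Λ),
      Integrable (fun x : ({X : Finset Λ // p X} → ℝ) × ({X : Finset Λ // ¬ p X} → ℝ)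
        => Real.log (Zq ν Φ t (e.symm x))) (μ₁.prod μ₂) :=
    fun t => (MPs.integrable_comp (continuous_log_Zq hν t).aestronglyMeasurable).mpr
      (hintlogZ t)
  -- coordinates of J₀ and K₀
  have hJ₀int : ∀ X : Finset Λ, Integrable (fun a => J₀ a X) μ₁ := by
    intro X
    by_cases h : p X
    · simp only [hJ₀def, dif_pos h]
      exact my_integrable_eval_pi (fun Y : {X : Finset Λ // p X} => v Y.1) ⟨X, h⟩
    · simp only [hJ₀def, dif_neg h]
      exact integrable_const 0
  have hJ₀avg : ∀ X : Finset Λ, ∫ a, J₀ a X ∂μ₁ = 0 := by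
    intro X
    by_cases h : p X
    · simp only [hJ₀def, dif_pos h]
      exact my_integral_eval_pi (fun Y : {X : Finset Λ // p X} => v Y.1) ⟨X, h⟩
    · simp only [hJ₀def, dif_neg h]
      exact integral_zero _ _
  have hK₀int : ∀ X : Finset Λ, Integrable (fun b => K₀ b X) μ₂ := by
    intro X
    by_cases h : p X
    · simp only [hK₀def, dif_pos h]
      exact integrable_const 0
    · simp only [hK₀def, dif_neg h]
      exact my_integrable_eval_pi (fun Y : {X : Finset Λ // ¬ p X} => v Y.1) ⟨X, h⟩
  have hK₀avg : ∀ X : Finset Λ, ∫ b, K₀ b X ∂μ₂ = 0 := by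
    intro X
    by_cases h : p X
    · simp only [hK₀def, dif_pos h]
      exact integral_zero _ _
    · simp only [hK₀def, dif_neg h]
      exact my_integral_eval_pi (fun Y : {X : Finset Λ // ¬ p X} => v Y.1) ⟨X, h⟩
  have hcontJ₀ : Continuous J₀ := by
    refine continuous_pi fun X => ?_
    by_cases h : p X
    · simp only [hJ₀def, dif_pos h]
      exact continuous_apply _
    · simp only [hJ₀def, dif_neg h]
      exact continuous_const
  have hintJ₀log : ∀ t : Finset (Finset Λ),
      Integrable (fun a => Real.log (Zq ν Φ t (J₀ a))) μ₁ := by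
    intro t
    refine Integrable.mono' (g := fun a => ∑ X, |J₀ a X| * M X)
      (integrable_finset_sum _ fun X _ => ((hJ₀int X).abs.mul_const (M X)))
      (((continuous_log_Zq hν t).comp hcontJ₀).aestronglyMeasurable)
      (ae_of_all _ fun a => ?_)
    rw [Real.norm_eq_abs]
    exact abs_log_Zq_le hν hν1 hM t (J₀ a)
  -- transport to the product space
  have htrans : ∀ t : Finset (Finset Λ), ∫ J, Real.log (Zq ν Φ t J) ∂μ₀
      = ∫ a, ∫ b, Real.log (Zq ν Φ t (e.symm (a, b))) ∂μ₂ ∂μ₁ := by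
    intro t
    rw [← MPs.integral_comp' (fun J => Real.log (Zq ν Φ t J))]
    exact integral_prod _ (hintProd t)
  -- block pressures only depend on the `p`-coordinates
  have hPs : ∀ s : Fin n, ∫ J, Real.log (Zq ν Φ (Finset.univ.filter (· ⊆ B s)) J) ∂μ₀
      = ∫ a, Real.log (Zq ν Φ (Finset.univ.filter (· ⊆ B s)) (J₀ a)) ∂μ₁ := by
    intro s
    rw [htrans]
    refine integral_congr_ae (ae_of_all _ fun a => ?_)
    have hb : ∀ b, Real.log (Zq ν Φ (Finset.univ.filter (· ⊆ B s)) (e.symm (a, b)))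
        = Real.log (Zq ν Φ (Finset.univ.filter (· ⊆ B s)) (J₀ a)) := by
      intro b
      rw [hesymm a b]
      congr 1
      refine Zq_congr fun X hX => ?_
      have hpX : p X := ⟨s, (Finset.mem_filter.mp hX).2⟩
      simp only [hJ₀def, hK₀def, Pi.add_apply, dif_pos hpX, add_zero]
    show (∫ b, Real.log (Zq ν Φ (Finset.univ.filter (· ⊆ B s)) (e.symm (a, b))) ∂μ₂)
      = Real.log (Zq ν Φ (Finset.univ.filter (· ⊆ B s)) (J₀ a))
    rw [integral_congr_ae (ae_of_all μ₂ hb), integral_const, probReal_univ, one_smul]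
  -- the Jensen (interpolation) step
  have hJensen : ∫ a, Real.log (Zq ν Φ Finset.univ (J₀ a)) ∂μ₁
      ≤ ∫ a, ∫ b, Real.log (Zq ν Φ Finset.univ (e.symm (a, b))) ∂μ₂ ∂μ₁ := by
    refine integral_mono_ae (hintJ₀log Finset.univ)
      ((hintProd Finset.univ).integral_prod_left) ?_
    filter_upwards [(hintProd Finset.univ).prod_right_ae] with a ha
    set c : (Λ → S) → ℝ := fun σ =>
      (∏ i, ν (σ i)) * Real.exp (∑ X, J₀ a X * Φ X σ) / Zq ν Φ Finset.univ (J₀ a)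
      with hcdef
    have hintlin : Integrable
        (fun b => Real.log (Zq ν Φ Finset.univ (J₀ a))
          + ∑ σ : Λ → S, c σ * (∑ X, K₀ b X * Φ X σ)) μ₂ :=
      (integrable_const _).add (integrable_finset_sum _ fun σ _ =>
        ((integrable_finset_sum _ fun X _ => (hK₀int X).mul_const _).const_mul _))
    have hpt : ∀ b, Real.log (Zq ν Φ Finset.univ (J₀ a))
        + ∑ σ : Λ → S, c σ * (∑ X, K₀ b X * Φ X σ)
        ≤ Real.log (Zq ν Φ Finset.univ (e.symm (a, b))) := by
      intro b
      rw [hesymm a b]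
      exact log_Zq_add_ge hν Finset.univ (J₀ a) (K₀ b)
    have havg : ∫ b, (Real.log (Zq ν Φ Finset.univ (J₀ a))
        + ∑ σ : Λ → S, c σ * (∑ X, K₀ b X * Φ X σ)) ∂μ₂
        = Real.log (Zq ν Φ Finset.univ (J₀ a)) := by
      rw [integral_add (integrable_const _) (integrable_finset_sum _ fun σ _ =>
          ((integrable_finset_sum _ fun X _ => (hK₀int X).mul_const _).const_mul _)),
        integral_const, probReal_univ, one_smul,
        integral_finset_sum _ (fun σ _ =>
          ((integrable_finset_sum _ fun X _ => (hK₀int X).mul_const _).const_mul _))]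
      have h0 : ∀ σ : Λ → S, ∫ b, c σ * (∑ X, K₀ b X * Φ X σ) ∂μ₂ = 0 := by
        intro σ
        rw [integral_const_mul, integral_finset_sum _ fun X _ => (hK₀int X).mul_const _]
        have hX0 : ∀ X : Finset Λ, ∫ b, K₀ b X * Φ X σ ∂μ₂ = 0 := by
          intro X
          rw [integral_mul_const, hK₀avg X, zero_mul]
        rw [Finset.sum_congr rfl fun X _ => hX0 X]
        simp
      rw [Finset.sum_congr rfl fun σ _ => h0 σ]
      simp
    calc Real.log (Zq ν Φ Finset.univ (J₀ a))
        = ∫ b, (Real.log (Zq ν Φ Finset.univ (J₀ a))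
            + ∑ σ : Λ → S, c σ * (∑ X, K₀ b X * Φ X σ)) ∂μ₂ := havg.symm
      _ ≤ ∫ b, Real.log (Zq ν Φ Finset.univ (e.symm (a, b))) ∂μ₂ :=
          integral_mono hintlin ha hpt
  -- conclusion
  calc ∑ s : Fin n, ∫ J, Real.log (Zq ν Φ (Finset.univ.filter (· ⊆ B s)) J) ∂μ₀
      = ∑ s : Fin n, ∫ a, Real.log (Zq ν Φ (Finset.univ.filter (· ⊆ B s)) (J₀ a)) ∂μ₁ :=
        Finset.sum_congr rfl fun s _ => hPs s
    _ = ∫ a, ∑ s : Fin n,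
          Real.log (Zq ν Φ (Finset.univ.filter (· ⊆ B s)) (J₀ a)) ∂μ₁ :=
        (integral_finset_sum _ fun s _ => hintJ₀log _).symm
    _ = ∫ a, (Real.log (Zq ν Φ Finset.univ (J₀ a))
          + (((n : ℝ) - 1) * Φ ∅ σ₀) * J₀ a ∅) ∂μ₁ := by
        refine integral_congr_ae (ae_of_all _ fun a => ?_)
        refine log_Zq_factor hν hν1 hΦloc n B hBdisj (J₀ a) (fun X hX => ?_) σ₀
        simp only [hJ₀def]
        exact dif_neg hX
    _ = ∫ a, Real.log (Zq ν Φ Finset.univ (J₀ a)) ∂μ₁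
          + (((n : ℝ) - 1) * Φ ∅ σ₀) * ∫ a, J₀ a ∅ ∂μ₁ := by
        rw [integral_add (hintJ₀log _) ((hJ₀int ∅).const_mul _), integral_const_mul]
    _ = ∫ a, Real.log (Zq ν Φ Finset.univ (J₀ a)) ∂μ₁ := by
        rw [hJ₀avg ∅, mul_zero, add_zero]
    _ ≤ ∫ a, ∫ b, Real.log (Zq ν Φ Finset.univ (e.symm (a, b))) ∂μ₂ ∂μ₁ := hJensen
    _ = ∫ J, Real.log (Zq ν Φ Finset.univ J) ∂μ₀ := (htrans Finset.univ).symm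
end

section
/- Consider the ferromagnetic nearest-neighbor Ising model on a finite set Λ partitioned into blocks Λ_1,…,Λ_n, with H_Λ(σ) = −Σ_{(n,n')} σ_n σ_{n'}, and the interpolating free energy functional α(t) = log Σ_σ exp(−β[t H_Λ(σ) + (1−t) Σ_s H_{Λ_s}(σ)]) for β > 0. Then dα/dt(t) = β Σ_{(n,n') ∈ C} ω_t(σ_n σ_{n'}), where C is the set of nearest-neighbor cross-block pairs and ω_t is the Gibbs state of the interpolating Hamiltonian; by the first Griffiths inequality each ω_t(σ_n σ_{n'}) ≥ 0, so α is nondecreasing on [0,1] and hence log Z_Λ ≥ Σ_s log Z_{Λ_s}. -/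
open Finset

/-- Sum over all spin configurations of a product of spins is nonnegative. -/
lemma ising_spin_sum_nonneg {V : Type*} [Fintype V] [DecidableEq V] (M : Multiset V) :
    0 ≤ ∑ σ : V → Bool, (M.map (fun v => if σ v then (1:ℝ) else -1)).prod := by
  have h1 : ∀ σ : V → Bool, (M.map (fun v => if σ v then (1:ℝ) else -1)).prod
      = ∏ v : V, (if σ v then (1:ℝ) else -1) ^ M.count v := by
    intro σ
    rw [Finset.prod_multiset_map_count]
    refine Finset.prod_subset (Finset.subset_univ _) ?_
    intro v _ hv
    rw [Multiset.count_eq_zero_of_notMem (by simpa using hv), pow_zero]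
  simp only [h1]
  rw [show (∑ σ : V → Bool, ∏ v : V, (if σ v = true then (1:ℝ) else -1) ^ M.count v)
      = ∏ v : V, ∑ b : Bool, (if b = true then (1:ℝ) else -1) ^ M.count v from
    (Fintype.prod_sum fun v b => (if b = true then (1:ℝ) else -1) ^ M.count v).symm]
  apply Finset.prod_nonneg
  intro v _
  rw [Fintype.sum_bool]
  rcases Nat.even_or_odd (M.count v) with h | h
  · norm_num [h.neg_one_pow]
  · norm_num [h.neg_one_pow]

lemma ising_exp_pm (a s : ℝ) (hs : s = 1 ∨ s = -1) :
    Real.exp (a * s) = s * Real.sinh a + Real.cosh a := by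
  rcases hs with rfl | rfl
  · rw [mul_one, one_mul, add_comm, Real.cosh_add_sinh]
  · rw [mul_neg_one, neg_one_mul, ← Real.cosh_sub_sinh]; ring

/-- Griffiths' first inequality for the Ising model. -/
lemma ising_griffiths {V : Type*} [Fintype V] [DecidableEq V]
    (E : Finset (V × V)) (c : V × V → ℝ) (hc : ∀ e ∈ E, 0 ≤ c e)
    (sp : (V → Bool) → V → ℝ) (hsp : ∀ σ v, sp σ v = if σ v then (1:ℝ) else -1)
    (x y : V) :
    0 ≤ ∑ σ : V → Bool, sp σ x * sp σ y *
      Real.exp (∑ e ∈ E, c e * (sp σ e.1 * sp σ e.2)) := by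
  have hpm : ∀ (σ : V → Bool) (v : V), sp σ v = 1 ∨ sp σ v = -1 := by
    intro σ v; by_cases h : σ v <;> simp [hsp, h]
  have hexp : ∀ σ : V → Bool,
      Real.exp (∑ e ∈ E, c e * (sp σ e.1 * sp σ e.2))
        = ∑ T ∈ E.powerset,
            ((∏ e ∈ T, sp σ e.1 * sp σ e.2) * ∏ e ∈ T, Real.sinh (c e)) *
              ∏ e ∈ E \ T, Real.cosh (c e) := by
    intro σ
    rw [Real.exp_sum]
    have he : ∀ e ∈ E, Real.exp (c e * (sp σ e.1 * sp σ e.2))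
        = sp σ e.1 * sp σ e.2 * Real.sinh (c e) + Real.cosh (c e) := by
      intro e _
      apply ising_exp_pm
      rcases hpm σ e.1 with h1 | h1 <;> rcases hpm σ e.2 with h2 | h2 <;>
        rw [h1, h2] <;> norm_num
    rw [Finset.prod_congr rfl he, Finset.prod_add]
    refine Finset.sum_congr rfl fun T _ => ?_
    rw [Finset.prod_mul_distrib]
  have main : ∑ σ : V → Bool, sp σ x * sp σ y *
        Real.exp (∑ e ∈ E, c e * (sp σ e.1 * sp σ e.2))
      = ∑ T ∈ E.powerset,
          ((∏ e ∈ T, Real.sinh (c e)) * ∏ e ∈ E \ T, Real.cosh (c e)) *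
            ∑ σ : V → Bool, sp σ x * sp σ y * ∏ e ∈ T, sp σ e.1 * sp σ e.2 := by
    simp only [hexp, Finset.mul_sum]
    rw [Finset.sum_comm]
    refine Finset.sum_congr rfl fun T _ => ?_
    refine Finset.sum_congr rfl fun σ _ => ?_
    ring
  rw [main]
  apply Finset.sum_nonneg
  intro T hT
  apply mul_nonneg
  · apply mul_nonneg
    · exact Finset.prod_nonneg fun e he =>
        Real.sinh_nonneg_iff.2 (hc e (Finset.mem_powerset.1 hT he))
    · exact Finset.prod_nonneg fun e _ => (Real.cosh_pos (c e)).le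
  · have hM : ∀ σ : V → Bool, sp σ x * sp σ y * ∏ e ∈ T, sp σ e.1 * sp σ e.2
        = ((x ::ₘ y ::ₘ (T.val.bind fun e => {e.1, e.2})).map (sp σ)).prod := by
      intro σ
      rw [Multiset.map_cons, Multiset.map_cons, Multiset.prod_cons, Multiset.prod_cons,
        Multiset.map_bind, Multiset.prod_bind, Finset.prod_eq_multiset_prod]
      simp [mul_assoc]
    calc (0:ℝ) ≤ ∑ σ : V → Bool, ((x ::ₘ y ::ₘ (T.val.bind fun e => {e.1, e.2})).map
          (fun v => if σ v then (1:ℝ) else -1)).prod := ising_spin_sum_nonneg _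
      _ = ∑ σ : V → Bool, sp σ x * sp σ y * ∏ e ∈ T, sp σ e.1 * sp σ e.2 := by
          refine Finset.sum_congr rfl fun σ _ => ?_
          rw [hM σ]
          congr 1
          refine Multiset.map_congr rfl fun v _ => (hsp σ v).symm

/-- Merging two sums over spin configurations of functions depending on disjoint
sets of spins. -/
lemma ising_merge_sum {V : Type*} [Fintype V] [DecidableEq V]
    (p : V → Prop) [DecidablePred p] (f g : (V → Bool) → ℝ)
    (hf : ∀ σ τ : V → Bool, (∀ v, p v → σ v = τ v) → f σ = f τ)
    (hg : ∀ σ τ : V → Bool, (∀ v, ¬ p v → σ v = τ v) → g σ = g τ) :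
    (∑ σ : V → Bool, f σ) * (∑ σ : V → Bool, g σ)
      = 2 ^ Fintype.card V * ∑ σ : V → Bool, f σ * g σ := by
  classical
  have card2 : (Finset.univ : Finset (V → Bool)).card = 2 ^ Fintype.card V := by
    rw [Finset.card_univ, Fintype.card_fun, Fintype.card_bool]
  rw [Finset.sum_mul_sum]
  set m : (V → Bool) → (V → Bool) → (V → Bool) :=
    fun σ τ v => if p v then σ v else τ v with hm
  have key : ∀ σ τ : V → Bool, f σ * g τ = f (m σ τ) * g (m σ τ) := by
    intro σ τ
    have h1 : f σ = f (m σ τ) := hf σ (m σ τ) (fun v hv => by simp [hm, hv])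
    have h2 : g τ = g (m σ τ) := hg τ (m σ τ) (fun v hv => by simp [hm, hv])
    rw [h1, h2]
  have swap : ∑ σ : V → Bool, ∑ τ : V → Bool, f σ * g τ
      = ∑ σ : V → Bool, ∑ τ : V → Bool, f σ * g σ := by
    rw [← Finset.sum_product', ← Finset.sum_product']
    refine Finset.sum_nbij' (fun x => (m x.1 x.2, m x.2 x.1))
      (fun x => (m x.1 x.2, m x.2 x.1)) (fun _ _ => Finset.mem_univ _)
      (fun _ _ => Finset.mem_univ _) ?_ ?_ ?_
    · intro x _
      ext v
      · by_cases hv : p v <;> simp [hm, hv]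
      · by_cases hv : p v <;> simp [hm, hv]
    · intro x _
      ext v
      · by_cases hv : p v <;> simp [hm, hv]
      · by_cases hv : p v <;> simp [hm, hv]
    · intro x _
      exact key x.1 x.2
  rw [swap]
  rw [Finset.sum_congr rfl (fun σ _ => Finset.sum_const (f σ * g σ))]
  simp only [card2, nsmul_eq_mul]
  rw [← Finset.mul_sum]
  push_cast
  ring

/-- Factorization of the decoupled partition function over blocks. -/
lemma ising_block_factor {V : Type*} [Fintype V] [DecidableEq V] {n : ℕ}
    (B : V → Fin n) (f : Fin n → (V → Bool) → ℝ)
    (hf : ∀ s (σ τ : V → Bool), (∀ v, B v = s → σ v = τ v) → f s σ = f s τ)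
    (K : Finset (Fin n)) :
    (∑ σ : V → Bool, ∏ s ∈ K, f s σ) * ((2:ℝ) ^ Fintype.card V) ^ K.card
      = 2 ^ Fintype.card V * ∏ s ∈ K, ∑ σ : V → Bool, f s σ := by
  classical
  induction K using Finset.induction with
  | empty =>
      simp only [Finset.prod_empty, Finset.card_empty, pow_zero, mul_one]
      rw [Finset.sum_const, Finset.card_univ, Fintype.card_fun, Fintype.card_bool,
        nsmul_eq_mul, mul_one]
      push_cast; ring
  | @insert a K ha ih =>
      have hmerge := ising_merge_sum (fun v => B v = a) (f a)
        (fun σ => ∏ s ∈ K, f s σ) (hf a)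
        (by
          intro σ τ h
          refine Finset.prod_congr rfl fun s hs => ?_
          refine hf s σ τ fun v hv => ?_
          refine h v fun hva => ha ?_
          have hsa : s = a := hv.symm.trans hva
          rwa [hsa] at hs)
      simp only [Finset.prod_insert ha]
      rw [Finset.card_insert_of_notMem ha, pow_succ]
      calc (∑ σ : V → Bool, f a σ * ∏ s ∈ K, f s σ)
            * (((2:ℝ) ^ Fintype.card V) ^ K.card * 2 ^ Fintype.card V)
          = ((2:ℝ) ^ Fintype.card V * ∑ σ : V → Bool, f a σ * ∏ s ∈ K, f s σ)
            * ((2:ℝ) ^ Fintype.card V) ^ K.card := by ring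
        _ = ((∑ σ : V → Bool, f a σ) * ∑ σ : V → Bool, ∏ s ∈ K, f s σ)
            * ((2:ℝ) ^ Fintype.card V) ^ K.card := by rw [← hmerge]
        _ = (∑ σ : V → Bool, f a σ)
            * ((∑ σ : V → Bool, ∏ s ∈ K, f s σ) * ((2:ℝ) ^ Fintype.card V) ^ K.card) := by
            ring
        _ = (∑ σ : V → Bool, f a σ)
            * (2 ^ Fintype.card V * ∏ s ∈ K, ∑ σ : V → Bool, f s σ) := by rw [ih]
        _ = 2 ^ Fintype.card V
            * ((∑ σ : V → Bool, f a σ) * ∏ s ∈ K, ∑ σ : V → Bool, f s σ) := by ring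

set_option maxHeartbeats 1000000 in
lemma ising_exp_affine_deriv (a b t : ℝ) :
    HasDerivAt (fun u : ℝ => Real.exp (a * u + b)) (a * Real.exp (a * t + b)) t := by
  have h1 : HasDerivAt (fun u : ℝ => a * u + b) a t := by
    simpa using ((hasDerivAt_id t).const_mul a).add_const b
  simpa [mul_comm] using h1.exp

set_option maxHeartbeats 1000000 in
/-- Ferromagnetic interpolation for the nearest-neighbor Ising model: the derivative of the
interpolating free energy functional `α(t)` is `β Σ_{(n,n') ∈ C} ω_t(σ_n σ_{n'})` over
cross-block bonds `C`; each such Gibbs correlation is nonnegative by Griffiths' first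
inequality, so `α` is nondecreasing on `[0,1]` and `log Z_Λ ≥ Σ_s log Z_{Λ_s}`. -/
theorem ising_interpolation_monotone
    {V : Type*} [Fintype V] [DecidableEq V] {n : ℕ}
    (E : Finset (V × V)) (B : V → Fin n) (β : ℝ) (hβ : 0 < β)
    (sp : (V → Bool) → V → ℝ) (hsp : ∀ σ v, sp σ v = if σ v then 1 else -1)
    (Ht : ℝ → (V → Bool) → ℝ)
    (hHt : ∀ t σ, Ht t σ = t * ∑ e ∈ E, sp σ e.1 * sp σ e.2
      + (1 - t) * ∑ e ∈ E.filter (fun e => B e.1 = B e.2), sp σ e.1 * sp σ e.2)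
    (α : ℝ → ℝ) (hα : ∀ t, α t = Real.log (∑ σ : V → Bool, Real.exp (β * Ht t σ)))
    (ω : ℝ → V × V → ℝ)
    (hω : ∀ t e, ω t e = (∑ σ : V → Bool, sp σ e.1 * sp σ e.2 * Real.exp (β * Ht t σ))
      / (∑ σ : V → Bool, Real.exp (β * Ht t σ)))
    (Zblock : Fin n → ℝ)
    (hZ : ∀ s, Zblock s = (∑ σ : V → Bool, Real.exp
        (β * ∑ e ∈ E.filter (fun e => B e.1 = s ∧ B e.2 = s), sp σ e.1 * sp σ e.2))
      / 2 ^ (Finset.univ.filter (fun v => B v ≠ s)).card) :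
    (∀ t : ℝ, HasDerivAt α (β * ∑ e ∈ E.filter (fun e => B e.1 ≠ B e.2), ω t e) t) ∧
    (∀ t ∈ Set.Icc (0 : ℝ) 1, ∀ e ∈ E.filter (fun e => B e.1 ≠ B e.2), 0 ≤ ω t e) ∧
    MonotoneOn α (Set.Icc (0 : ℝ) 1) ∧
    ∑ s : Fin n, Real.log (Zblock s) ≤ α 1 := by
  have hFpos : ∀ t : ℝ, 0 < ∑ σ : V → Bool, Real.exp (β * Ht t σ) :=
    fun t => Finset.sum_pos (fun σ _ => Real.exp_pos _) Finset.univ_nonempty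
  have hsum : ∀ σ : V → Bool,
      (∑ e ∈ E.filter (fun e => B e.1 = B e.2), sp σ e.1 * sp σ e.2)
      + ∑ e ∈ E.filter (fun e => B e.1 ≠ B e.2), sp σ e.1 * sp σ e.2
      = ∑ e ∈ E, sp σ e.1 * sp σ e.2 := fun σ =>
    Finset.sum_filter_add_sum_filter_not E (fun e => B e.1 = B e.2) _
  have hHt' : ∀ (u : ℝ) (σ : V → Bool), β * Ht u σ
      = (β * ∑ e ∈ E.filter (fun e => B e.1 ≠ B e.2), sp σ e.1 * sp σ e.2) * u
        + β * ∑ e ∈ E.filter (fun e => B e.1 = B e.2), sp σ e.1 * sp σ e.2 := by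
    intro u σ
    rw [hHt, ← hsum σ]
    ring
  -- Part 1 : derivative of α
  have hderiv : ∀ t : ℝ, HasDerivAt α
      (β * ∑ e ∈ E.filter (fun e => B e.1 ≠ B e.2), ω t e) t := by
    intro t
    have hFd : HasDerivAt (fun u : ℝ => ∑ σ : V → Bool, Real.exp (β * Ht u σ))
        (∑ σ : V → Bool,
          (β * ∑ e ∈ E.filter (fun e => B e.1 ≠ B e.2), sp σ e.1 * sp σ e.2)
            * Real.exp (β * Ht t σ)) t := by
      apply HasDerivAt.fun_sum
      intro σ _
      have key := ising_exp_affine_deriv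
        (β * ∑ e ∈ E.filter (fun e => B e.1 ≠ B e.2), sp σ e.1 * sp σ e.2)
        (β * ∑ e ∈ E.filter (fun e => B e.1 = B e.2), sp σ e.1 * sp σ e.2) t
      simp only [← hHt'] at key
      exact key
    have hlog := hFd.log (ne_of_gt (hFpos t))
    have hαfun : α = fun u => Real.log (∑ σ : V → Bool, Real.exp (β * Ht u σ)) :=
      funext hα
    rw [hαfun]
    convert hlog using 1
    have hswap : ∑ e ∈ E.filter (fun e => B e.1 ≠ B e.2),
          ∑ σ : V → Bool, sp σ e.1 * sp σ e.2 * Real.exp (β * Ht t σ)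
        = ∑ σ : V → Bool,
            (∑ e ∈ E.filter (fun e => B e.1 ≠ B e.2), sp σ e.1 * sp σ e.2)
              * Real.exp (β * Ht t σ) := by
      rw [Finset.sum_comm]
      exact Finset.sum_congr rfl fun σ _ => (Finset.sum_mul _ _ _).symm
    calc β * ∑ e ∈ E.filter (fun e => B e.1 ≠ B e.2), ω t e
        = β * ((∑ e ∈ E.filter (fun e => B e.1 ≠ B e.2),
            ∑ σ : V → Bool, sp σ e.1 * sp σ e.2 * Real.exp (β * Ht t σ))
              / ∑ σ : V → Bool, Real.exp (β * Ht t σ)) := by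
          rw [Finset.sum_div]
          exact congrArg (β * ·) (Finset.sum_congr rfl fun e _ => hω t e)
      _ = (∑ σ : V → Bool,
            (β * ∑ e ∈ E.filter (fun e => B e.1 ≠ B e.2), sp σ e.1 * sp σ e.2)
              * Real.exp (β * Ht t σ)) / ∑ σ : V → Bool, Real.exp (β * Ht t σ) := by
          rw [hswap, ← mul_div_assoc, Finset.mul_sum]
          congr 1
          exact Finset.sum_congr rfl fun σ _ => by ring
  -- Part 2 : Griffiths inequality
  have hgrif : ∀ t ∈ Set.Icc (0:ℝ) 1, ∀ e : V × V, 0 ≤ ω t e := by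
    intro t ht e
    rw [hω]
    refine div_nonneg ?_ (hFpos t).le
    have hform : ∀ σ : V → Bool, β * Ht t σ
        = ∑ e' ∈ E, (β * (t + if B e'.1 = B e'.2 then 1 - t else 0))
            * (sp σ e'.1 * sp σ e'.2) := by
      intro σ
      have h1 : ∀ e' ∈ E,
          (β * (t + if B e'.1 = B e'.2 then 1 - t else 0)) * (sp σ e'.1 * sp σ e'.2)
          = β * t * (sp σ e'.1 * sp σ e'.2)
            + β * (1 - t) * (if B e'.1 = B e'.2 then sp σ e'.1 * sp σ e'.2 else 0) := by
        intro e' _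
        by_cases hb : B e'.1 = B e'.2 <;> simp [hb] <;> ring
      rw [Finset.sum_congr rfl h1, Finset.sum_add_distrib, ← Finset.mul_sum,
        ← Finset.mul_sum, ← Finset.sum_filter, hHt]
      ring
    simp only [hform]
    refine ising_griffiths E _ ?_ sp hsp e.1 e.2
    intro e' _
    by_cases hb : B e'.1 = B e'.2 <;> simp [hb] <;> nlinarith [ht.1, ht.2]
  -- Part 3 : monotonicity
  have hmono : MonotoneOn α (Set.Icc (0:ℝ) 1) := by
    have hdiff : Differentiable ℝ α := fun t => (hderiv t).differentiableAt
    apply monotoneOn_of_deriv_nonneg (convex_Icc 0 1) hdiff.continuous.continuousOn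
      hdiff.differentiableOn
    intro x hx
    rw [interior_Icc] at hx
    rw [(hderiv x).deriv]
    exact mul_nonneg hβ.le
      (Finset.sum_nonneg fun e _ => hgrif x ⟨hx.1.le, hx.2.le⟩ e)
  -- Part 4 : block decomposition at t = 0
  have hfdep : ∀ (s : Fin n) (σ τ : V → Bool), (∀ v, B v = s → σ v = τ v) →
      Real.exp (β * ∑ e ∈ E.filter (fun e => B e.1 = s ∧ B e.2 = s),
          sp σ e.1 * sp σ e.2)
      = Real.exp (β * ∑ e ∈ E.filter (fun e => B e.1 = s ∧ B e.2 = s),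
          sp τ e.1 * sp τ e.2) := by
    intro s σ τ h
    congr 1
    congr 1
    refine Finset.sum_congr rfl fun e he => ?_
    obtain ⟨-, h1, h2⟩ := Finset.mem_filter.1 he
    rw [hsp σ e.1, hsp τ e.1, hsp σ e.2, hsp τ e.2, h e.1 h1, h e.2 h2]
  have hBF := ising_block_factor B
    (fun s σ => Real.exp (β * ∑ e ∈ E.filter (fun e => B e.1 = s ∧ B e.2 = s),
      sp σ e.1 * sp σ e.2)) hfdep Finset.univ
  have hdecomp : ∀ σ : V → Bool,
      ∏ s : Fin n, Real.exp (β * ∑ e ∈ E.filter (fun e => B e.1 = s ∧ B e.2 = s),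
        sp σ e.1 * sp σ e.2) = Real.exp (β * Ht 0 σ) := by
    intro σ
    rw [← Real.exp_sum]
    congr 1
    have hfe : ∀ s : Fin n, E.filter (fun e => B e.1 = s ∧ B e.2 = s)
        = (E.filter (fun e => B e.1 = B e.2)).filter (fun e => B e.1 = s) := by
      intro s
      rw [Finset.filter_filter]
      refine Finset.filter_congr fun e _ => ?_
      constructor
      · rintro ⟨h1, h2⟩; exact ⟨h1.trans h2.symm, h1⟩
      · rintro ⟨h1, h2⟩; exact ⟨h2, h1.symm.trans h2⟩
    have hfib : ∑ s : Fin n, ∑ e ∈ E.filter (fun e => B e.1 = s ∧ B e.2 = s),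
          sp σ e.1 * sp σ e.2
        = ∑ e ∈ E.filter (fun e => B e.1 = B e.2), sp σ e.1 * sp σ e.2 := by
      simp only [hfe]
      exact Finset.sum_fiberwise (E.filter fun e => B e.1 = B e.2) (fun e => B e.1)
        (fun e => sp σ e.1 * sp σ e.2)
    rw [← Finset.mul_sum, hfib, hHt]
    ring
  have hZpos : ∀ s : Fin n, 0 < Zblock s := by
    intro s
    rw [hZ]
    exact div_pos (Finset.sum_pos (fun σ _ => Real.exp_pos _) Finset.univ_nonempty)
      (by positivity)
  have hcards : (∑ s : Fin n, (Finset.univ.filter (fun v => B v ≠ s)).card)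
      + Fintype.card V = n * Fintype.card V := by
    have h1 : ∀ s : Fin n, (Finset.univ.filter (fun v => B v = s)).card
        + (Finset.univ.filter (fun v => B v ≠ s)).card = Fintype.card V := by
      intro s
      rw [← Finset.card_univ (α := V)]
      exact Finset.card_filter_add_card_filter_not _
    have h2 : ∑ s : Fin n, (Finset.univ.filter (fun v => B v = s)).card
        = Fintype.card V := by
      rw [← Finset.card_univ (α := V)]
      exact (Finset.card_eq_sum_card_fiberwise
        (fun v _ => Finset.mem_univ (B v))).symm
    calc (∑ s : Fin n, (Finset.univ.filter (fun v => B v ≠ s)).card) + Fintype.card V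
        = (∑ s : Fin n, (Finset.univ.filter (fun v => B v ≠ s)).card)
          + ∑ s : Fin n, (Finset.univ.filter (fun v => B v = s)).card := by rw [h2]
      _ = ∑ s : Fin n, ((Finset.univ.filter (fun v => B v = s)).card
          + (Finset.univ.filter (fun v => B v ≠ s)).card) := by
          rw [Finset.sum_add_distrib]; ring
      _ = ∑ _s : Fin n, Fintype.card V := Finset.sum_congr rfl fun s _ => h1 s
      _ = n * Fintype.card V := by
          rw [Finset.sum_const, Finset.card_univ, Fintype.card_fin, smul_eq_mul]
  have hprodZ : ∏ s : Fin n, Zblock s = ∑ σ : V → Bool, Real.exp (β * Ht 0 σ) := by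
    have hstep1 : (∏ s : Fin n, Zblock s)
          * (2:ℝ) ^ (∑ s : Fin n, (Finset.univ.filter (fun v => B v ≠ s)).card)
        = ∏ s : Fin n, ∑ σ : V → Bool,
            Real.exp (β * ∑ e ∈ E.filter (fun e => B e.1 = s ∧ B e.2 = s),
              sp σ e.1 * sp σ e.2) := by
      rw [← Finset.prod_pow_eq_pow_sum, ← Finset.prod_mul_distrib]
      refine Finset.prod_congr rfl fun s _ => ?_
      rw [hZ s, div_mul_cancel₀]
      positivity
    have hstep2 : (∑ σ : V → Bool, Real.exp (β * Ht 0 σ))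
          * ((2:ℝ) ^ Fintype.card V) ^ n
        = 2 ^ Fintype.card V * ∏ s : Fin n, ∑ σ : V → Bool,
            Real.exp (β * ∑ e ∈ E.filter (fun e => B e.1 = s ∧ B e.2 = s),
              sp σ e.1 * sp σ e.2) := by
      rw [← hBF, Finset.card_univ, Fintype.card_fin]
      congr 1
      exact Finset.sum_congr rfl fun σ _ => (hdecomp σ).symm
    have hpow : ((2:ℝ) ^ Fintype.card V) ^ n = 2 ^ (n * Fintype.card V) := by
      rw [← pow_mul, Nat.mul_comm]
    have h2n : (2:ℝ) ^ Fintype.card V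
          * (2:ℝ) ^ (∑ s : Fin n, (Finset.univ.filter (fun v => B v ≠ s)).card)
        = 2 ^ (n * Fintype.card V) := by
      rw [← pow_add, ← hcards, Nat.add_comm]
    have hfinal : (∏ s : Fin n, Zblock s) * 2 ^ (n * Fintype.card V)
        = (∑ σ : V → Bool, Real.exp (β * Ht 0 σ)) * 2 ^ (n * Fintype.card V) := by
      calc (∏ s : Fin n, Zblock s) * 2 ^ (n * Fintype.card V)
          = 2 ^ Fintype.card V * ((∏ s : Fin n, Zblock s)
            * (2:ℝ) ^ (∑ s : Fin n, (Finset.univ.filter (fun v => B v ≠ s)).card)) := by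
            rw [← h2n]; ring
        _ = 2 ^ Fintype.card V * ∏ s : Fin n, ∑ σ : V → Bool,
              Real.exp (β * ∑ e ∈ E.filter (fun e => B e.1 = s ∧ B e.2 = s),
                sp σ e.1 * sp σ e.2) := by rw [hstep1]
        _ = (∑ σ : V → Bool, Real.exp (β * Ht 0 σ)) * 2 ^ (n * Fintype.card V) := by
            rw [← hstep2, hpow]
    exact mul_right_cancel₀ (by positivity) hfinal
  refine ⟨hderiv, fun t ht e _ => hgrif t ht e, hmono, ?_⟩
  have hlogsum : ∑ s : Fin n, Real.log (Zblock s) = α 0 := by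
    rw [← Real.log_prod (fun s _ => (hZpos s).ne'), hprodZ, hα 0]
  rw [hlogsum]
  exact hmono (Set.mem_Icc.2 ⟨le_refl 0, zero_le_one⟩)
    (Set.mem_Icc.2 ⟨zero_le_one, le_refl 1⟩) zero_le_one
end

section
/- Griffiths' first inequality: for a finite set Λ, spins σ ∈ {±1}^Λ, and Hamiltonian −H(σ) = Σ_{A ⊆ Λ} K_A Π_{i∈A} σ_i with all couplings K_A ≥ 0, the Gibbs expectation ω(Π_{i∈B} σ_i) = Σ_σ (Π_{i∈B} σ_i) e^{−H(σ)} / Σ_σ e^{−H(σ)} is nonnegative for every B ⊆ Λ. -/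
open Finset

private lemma griffiths_key {Λ : Type*} [Fintype Λ] [DecidableEq Λ] (m : Λ → ℕ) :
    0 ≤ ∑ σ : Λ → Bool, ∏ i, (if σ i then (1:ℝ) else -1) ^ m i := by
  classical
  rw [← Fintype.prod_sum (fun (i : Λ) (b : Bool) => (if b then (1:ℝ) else -1) ^ m i)]
  apply Finset.prod_nonneg
  intro i _
  rcases Nat.even_or_odd (m i) with h | h
  · simp [Fintype.sum_bool, h.neg_one_pow]
  · simp [Fintype.sum_bool, h.neg_one_pow]

private lemma prod_pm_one {Λ : Type*} [DecidableEq Λ] (σ : Λ → Bool) (A : Finset Λ) :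
    (∏ i ∈ A, (if σ i then (1:ℝ) else -1)) = 1 ∨
    (∏ i ∈ A, (if σ i then (1:ℝ) else -1)) = -1 := by
  classical
  induction A using Finset.induction with
  | empty => simp
  | @insert a s ha ih =>
    rw [Finset.prod_insert ha]
    rcases ih with h1 | h1 <;> rw [h1] <;> by_cases hb : σ a <;> simp [hb]

private lemma exp_pm (K : ℝ) (t : ℝ) (ht : t = 1 ∨ t = -1) :
    Real.exp (K * t) = Real.cosh K + t * Real.sinh K := by
  rcases ht with h | h <;> subst h <;> simp [Real.cosh_eq, Real.sinh_eq, Real.exp_neg]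
  <;> ring

private lemma griffiths_ind {Λ : Type*} [Fintype Λ] [DecidableEq Λ]
    (f : Λ → ℝ) (C : Finset Λ) :
    (∏ i ∈ C, f i) = ∏ x, f x ^ (if x ∈ C then 1 else 0) := by
  rw [← Fintype.prod_ite_mem C f]
  exact Finset.prod_congr rfl fun x _ => by by_cases h : x ∈ C <;> simp [h]

/-- Griffiths' first inequality: for a ferromagnetic Hamiltonian
`−H(σ) = Σ_{A ⊆ Λ} K_A Π_{i∈A} σ_i` with all `K_A ≥ 0`, every Gibbs expectation of a
product of spins is nonnegative: `ω(Π_{i∈B} σ_i) ≥ 0`. -/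
theorem griffiths_first_inequality
    {Λ : Type*} [Fintype Λ] [DecidableEq Λ]
    (K : Finset Λ → ℝ) (hK : ∀ A, 0 ≤ K A)
    (sp : (Λ → Bool) → Λ → ℝ) (hsp : ∀ σ i, sp σ i = if σ i then 1 else -1)
    (B : Finset Λ) :
    0 ≤ (∑ σ : Λ → Bool, (∏ i ∈ B, sp σ i) *
          Real.exp (∑ A : Finset Λ, K A * ∏ i ∈ A, sp σ i))
        / (∑ σ : Λ → Bool, Real.exp (∑ A : Finset Λ, K A * ∏ i ∈ A, sp σ i)) := by
  classical
  set e : (Λ → Bool) → Λ → ℝ := fun σ i => if σ i then (1:ℝ) else -1 with he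
  have hsp' : sp = e := by funext σ i; rw [hsp]
  subst hsp'
  apply div_nonneg _ (Finset.sum_nonneg fun _ _ => (Real.exp_pos _).le)
  have hexp : ∀ σ : Λ → Bool,
      Real.exp (∑ A : Finset Λ, K A * ∏ i ∈ A, e σ i)
        = ∑ S ∈ (Finset.univ : Finset (Finset Λ)).powerset,
            ((∏ A ∈ S, ∏ i ∈ A, e σ i) * ∏ A ∈ S, Real.sinh (K A)) *
              ∏ A ∈ Finset.univ \ S, Real.cosh (K A) := by
    intro σ
    rw [Real.exp_sum]
    have h1 : ∀ A : Finset Λ, Real.exp (K A * ∏ i ∈ A, e σ i)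
        = (∏ i ∈ A, e σ i) * Real.sinh (K A) + Real.cosh (K A) := by
      intro A
      rw [exp_pm (K A) _ (prod_pm_one σ A)]; ring
    rw [Finset.prod_congr rfl fun A _ => h1 A, Finset.prod_add]
    exact Finset.sum_congr rfl fun S _ => by rw [Finset.prod_mul_distrib]
  calc (0:ℝ) ≤ ∑ S ∈ (Finset.univ : Finset (Finset Λ)).powerset,
        ((∑ σ : Λ → Bool, (∏ i ∈ B, e σ i) * ∏ A ∈ S, ∏ i ∈ A, e σ i) *
          ∏ A ∈ S, Real.sinh (K A)) * ∏ A ∈ Finset.univ \ S, Real.cosh (K A) := by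
        apply Finset.sum_nonneg
        intro S _
        apply mul_nonneg (mul_nonneg ?_ ?_) ?_
        · have heq : ∀ σ : Λ → Bool,
              (∏ i ∈ B, e σ i) * ∏ A ∈ S, ∏ i ∈ A, e σ i
              = ∏ i, (e σ i) ^
                  ((if i ∈ B then 1 else 0) + ∑ A ∈ S, if i ∈ A then 1 else 0) := by
            intro σ
            simp only [pow_add, Finset.prod_mul_distrib,
              ← Finset.prod_pow_eq_pow_sum]
            rw [← griffiths_ind (e σ) B]
            congr 1
            rw [Finset.prod_comm]
            exact Finset.prod_congr rfl fun A _ => (griffiths_ind (e σ) A)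
          rw [Finset.sum_congr rfl fun σ _ => heq σ]
          exact griffiths_key _
        · exact Finset.prod_nonneg fun A _ => (by rw [← Real.sinh_zero]; exact Real.sinh_le_sinh.2 (hK A))
        · exact Finset.prod_nonneg fun A _ => (Real.cosh_pos _).le
    _ = ∑ σ : Λ → Bool, (∏ i ∈ B, e σ i) *
          Real.exp (∑ A : Finset Λ, K A * ∏ i ∈ A, e σ i) := by
        simp only [hexp, Finset.mul_sum, Finset.sum_mul]
        rw [Finset.sum_comm]
        exact Finset.sum_congr rfl fun S _ => Finset.sum_congr rfl fun σ _ => by ring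
end
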